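/- arXiv:1606.00553 — 5 statements merged into one kernel-verified Lean document; each statement's English description precedes it below -/
import Mathlib

section
/- For every j ≥ 0: max( ‖(I − R) e_j‖ , ‖(R⁻¹ − I)* e_j‖ ) ≤ ‖(R⁻¹ − R*)* e_j‖ ≤ √(ε_j) · ‖C‖ / √(1 − ‖C‖²). (Here ‖(I − R) e_j‖, ‖(R⁻¹ − I)* e_j‖ and ‖(R⁻¹ − R*)* e_j‖ are the ℓ²-norms of the j-th rows of I − R*, R⁻¹ − I and R⁻¹ − R*, respectively.) -/
open ContinuousLinearMap


local notation "H" => lp (fun _ : ℕ => ℂ) 2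

lemma coord_eq (f : lp (fun _ : ℕ => ℂ) 2) (k : ℕ) :
    (inner ℂ (lp.single 2 k (1:ℂ)) f : ℂ) = f k := by
  rw [lp.inner_single_left]
  simp [RCLike.inner_apply]

lemma adj_coord (A : H →L[ℂ] H) (j k : ℕ) :
    ((adjoint A) (lp.single 2 j (1:ℂ))) k
      = starRingEnd ℂ (inner ℂ (lp.single 2 j (1:ℂ)) (A (lp.single 2 k (1:ℂ))) : ℂ) := by
  rw [← coord_eq, adjoint_inner_right, ← inner_conj_symm]

lemma comp_entry (A B : H →L[ℂ] H) (j k : ℕ)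
    (hB : ∀ m, k < m → (B (lp.single 2 k (1:ℂ))) m = 0) :
    (inner ℂ (lp.single 2 j (1:ℂ)) ((A ∘L B) (lp.single 2 k (1:ℂ))) : ℂ)
      = ∑ m ∈ Finset.range (k+1),
          (inner ℂ (lp.single 2 j (1:ℂ)) (A (lp.single 2 m (1:ℂ))) : ℂ)
            * (B (lp.single 2 k (1:ℂ))) m := by
  rw [coord_eq, comp_apply, ← coord_eq, ← adjoint_inner_left, lp.inner_eq_tsum]
  rw [tsum_eq_sum (s := Finset.range (k+1))]
  · refine Finset.sum_congr rfl fun m _ => ?_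
    rw [RCLike.inner_apply, adj_coord]
    simp [mul_comm]
  · intro m hm
    rw [hB m (by simpa using hm)]
    simp

open scoped ENNReal in
lemma norm_dom (f g : lp (fun _ : ℕ => ℂ) 2) (h : ∀ k, ‖f k‖ ≤ ‖g k‖) : ‖f‖ ≤ ‖g‖ := by
  have h2 : (0:ℝ) < (2 : ℝ≥0∞).toReal := by norm_num
  have hle : ‖f‖ ^ (2 : ℝ≥0∞).toReal ≤ ‖g‖ ^ (2 : ℝ≥0∞).toReal := by
    rw [lp.norm_rpow_eq_tsum h2 f, lp.norm_rpow_eq_tsum h2 g]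
    refine Summable.tsum_le_tsum (fun k => ?_) ((lp.memℓp f).summable h2) ((lp.memℓp g).summable h2)
    exact Real.rpow_le_rpow (norm_nonneg _) (h k) (le_of_lt h2)
  have h2' : (2 : ℝ≥0∞).toReal = ((2:ℕ):ℝ) := by norm_num
  rw [h2', Real.rpow_natCast, Real.rpow_natCast] at hle
  exact (pow_le_pow_iff_left₀ (norm_nonneg f) (norm_nonneg g) two_ne_zero).mp hle

lemma diag_ineq {s : ℝ} (hs : 0 < s) : |1 - s| ≤ |s⁻¹ - s| ∧ |s⁻¹ - 1| ≤ |s⁻¹ - s| := by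
  rcases le_or_gt s 1 with h | h
  · have h1 : (1:ℝ) ≤ s⁻¹ := (one_le_inv_iff₀).mpr ⟨hs, h⟩
    rw [abs_of_nonneg (by linarith), abs_of_nonneg (by linarith), abs_of_nonneg (by linarith)]
    constructor <;> linarith
  · have h1 : s⁻¹ ≤ 1 := (inv_le_one_iff₀).mpr (Or.inr h.le)
    rw [abs_of_nonpos (by linarith), abs_of_nonpos (by linarith), abs_of_nonpos (by linarith)]
    constructor <;> linarith

set_option maxHeartbeats 2000000 in
/-- Theorem 2.4, row estimates: with `ε_j := ‖C e_j‖²`,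
`max(‖(I−R)e_j‖, ‖(R⁻¹−I)* e_j‖) ≤ ‖(R⁻¹−R*)* e_j‖ ≤ √ε_j ‖C‖ / √(1−‖C‖²)`. -/
theorem grunsky_row_bounds
    (C R Rinv : lp (fun _ : ℕ => ℂ) 2 →L[ℂ] lp (fun _ : ℕ => ℂ) 2)
    (hC : ‖C‖ < 1)
    (hRtri : ∀ j k : ℕ, k < j → (inner ℂ (lp.single 2 j (1:ℂ)) (R (lp.single 2 k (1:ℂ))) : ℂ) = 0)
    (hRdiagRe : ∀ n : ℕ,
      0 < (inner ℂ (lp.single 2 n (1:ℂ)) (R (lp.single 2 n (1:ℂ))) : ℂ).re)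
    (hRdiagIm : ∀ n : ℕ,
      (inner ℂ (lp.single 2 n (1:ℂ)) (R (lp.single 2 n (1:ℂ))) : ℂ).im = 0)
    (hM : adjoint R ∘L R = 1 - adjoint C ∘L C)
    (hRinv : R ∘L Rinv = 1 ∧ Rinv ∘L R = 1)
    (ε : ℕ → ℝ) (hε : ∀ n, ε n = ‖C (lp.single 2 n (1:ℂ))‖^2) :
    ∀ j : ℕ,
      max ‖(1 - R) (lp.single 2 j (1:ℂ))‖ ‖(adjoint (Rinv - 1)) (lp.single 2 j (1:ℂ))‖
          ≤ ‖(adjoint (Rinv - adjoint R)) (lp.single 2 j (1:ℂ))‖ ∧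
      ‖(adjoint (Rinv - adjoint R)) (lp.single 2 j (1:ℂ))‖
          ≤ Real.sqrt (ε j) * ‖C‖ / Real.sqrt (1 - ‖C‖^2) := by
  classical
  intro j
  set e : ℕ → lp (fun _ : ℕ => ℂ) 2 := fun n => lp.single 2 n (1:ℂ) with he
  -- coordinate form of triangularity of R
  have hRtri' : ∀ m k : ℕ, k < m → (R (e k)) m = 0 := by
    intro m k h
    rw [← coord_eq]
    exact hRtri m k h
  -- diagonal entries of R, coordinate form
  have hRdiag' : ∀ n : ℕ, (R (e n)) n = (((inner ℂ (e n) (R (e n)) : ℂ).re : ℝ) : ℂ) := by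
    intro n
    apply Complex.ext
    · rw [← coord_eq (R (e n)) n]
      simp
      rfl
    · have := hRdiagIm n
      rw [coord_eq] at this
      simpa using this
  have hrne : ∀ n : ℕ, (R (e n)) n ≠ 0 := by
    intro n hn
    have h1 := hRdiagRe n
    rw [coord_eq] at h1
    rw [hn] at h1
    simp at h1
  -- entry formula for Rinv ∘L R = 1
  have hform : ∀ p k : ℕ, ((e k) p : ℂ)
      = ∑ m ∈ Finset.range (k+1), (Rinv (e m)) p * (R (e k)) m := by
    intro p k
    have h := comp_entry Rinv R p k (fun m hm => hRtri' m k hm)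
    rw [hRinv.2] at h
    simpa only [coord_eq, ContinuousLinearMap.one_apply] using h
  -- triangularity of Rinv
  have hQtri : ∀ p k : ℕ, k < p → (Rinv (e k)) p = 0 := by
    intro p k
    induction k using Nat.strong_induction_on with
    | _ k ih =>
      intro hkp
      have h := hform p k
      have hzero : ((e k) p : ℂ) = 0 := by
        simp only [he]
        exact lp.single_apply_ne (E := fun _ : ℕ => ℂ) 2 k (1:ℂ) (Nat.ne_of_gt hkp)
      rw [hzero, Finset.sum_range_succ, Finset.sum_eq_zero, zero_add] at h
      · rcases mul_eq_zero.mp h.symm with h' | h'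
        · exact h'
        · exact absurd h' (hrne k)
      · intro m hm
        have hmk := Finset.mem_range.mp hm
        rw [ih m hmk (hmk.trans hkp), zero_mul]
  -- diagonal of Rinv
  have hQdiag : ∀ n : ℕ, (Rinv (e n)) n * (R (e n)) n = 1 := by
    intro n
    have h := hform n n
    rw [Finset.sum_range_succ, Finset.sum_eq_zero, zero_add] at h
    · rw [← h, he]
      exact lp.single_apply_self (E := fun _ : ℕ => ℂ) 2 n (1:ℂ)
    · intro m hm
      rw [hQtri n m (Finset.mem_range.mp hm), zero_mul]
  -- scalars
  set r : ℂ := (R (e j)) j with hrdef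
  set q : ℂ := (Rinv (e j)) j with hqdef
  set s : ℝ := (inner ℂ (e j) (R (e j)) : ℂ).re with hsdef
  have hs : 0 < s := hRdiagRe j
  have hr : r = (s : ℂ) := hRdiag' j
  have hq : q = ((s⁻¹ : ℝ) : ℂ) := by
    have h := hQdiag j
    rw [← hqdef, ← hrdef, hr] at h
    have hsne : (s : ℂ) ≠ 0 := by
      simpa using ne_of_gt hs
    field_simp at h ⊢
    push_cast
    rw [eq_div_iff hsne, h]
  -- coordinates of the three vectors
  have hy : ∀ k, ((adjoint (Rinv - adjoint R)) (e j)) k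
      = starRingEnd ℂ ((Rinv (e k)) j) - (R (e j)) k := by
    intro k
    rw [adj_coord, coord_eq, ContinuousLinearMap.sub_apply, lp.coeFn_sub, Pi.sub_apply,
      adj_coord, coord_eq, map_sub, Complex.conj_conj]
  have hx1 : ∀ k, ((1 - R) (e j)) k = (e j) k - (R (e j)) k := by
    intro k
    rw [ContinuousLinearMap.sub_apply, ContinuousLinearMap.one_apply, lp.coeFn_sub, Pi.sub_apply]
  have hx2 : ∀ k, (((adjoint (Rinv - 1)) (e j) : lp (fun _ : ℕ => ℂ) 2) : ∀ _, ℂ) k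
      = starRingEnd ℂ ((Rinv (e k)) j - (e k) j) := by
    intro k
    rw [adj_coord, coord_eq, ContinuousLinearMap.sub_apply, ContinuousLinearMap.one_apply,
      lp.coeFn_sub, Pi.sub_apply]
  -- single coordinates
  have hsing : ∀ m k : ℕ, m ≠ k → ((e k) m : ℂ) = 0 := by
    intro m k h
    exact lp.single_apply_ne (E := fun _ : ℕ => ℂ) 2 k (1:ℂ) h
  have hsingself : ∀ k : ℕ, ((e k) k : ℂ) = 1 := by
    intro k
    exact lp.single_apply_self (E := fun _ : ℕ => ℂ) 2 k (1:ℂ)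
  -- diagonal value of y
  have hyj : ((adjoint (Rinv - adjoint R)) (e j)) j = ((s⁻¹ - s : ℝ) : ℂ) := by
    rw [hy j, ← hqdef, ← hrdef, hq, hr, Complex.conj_ofReal]
    push_cast
    ring
  have hnyj : ‖((adjoint (Rinv - adjoint R)) (e j)) j‖ = |s⁻¹ - s| := by
    rw [hyj, Complex.norm_real, Real.norm_eq_abs]
  -- dominance for x1
  have hdom1 : ∀ k, ‖((1 - R) (e j)) k‖ ≤ ‖((adjoint (Rinv - adjoint R)) (e j)) k‖ := by
    intro k
    rcases lt_trichotomy k j with h | h | h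
    · rw [hx1 k, hy k, hsing k j (Nat.ne_of_lt h), hQtri j k h, map_zero]
    · subst h
      rw [hnyj, hx1 k, hsingself k, ← hrdef, hr]
      have : (1 : ℂ) - (s : ℂ) = ((1 - s : ℝ) : ℂ) := by push_cast; ring
      rw [this, Complex.norm_real, Real.norm_eq_abs]
      exact (diag_ineq hs).1
    · rw [hx1 k, hsing k j (Nat.ne_of_gt h), hRtri' k j h, sub_zero, norm_zero]
      exact norm_nonneg _
  -- dominance for x2
  have hdom2 : ∀ k, ‖(((adjoint (Rinv - 1)) (e j) : lp (fun _ : ℕ => ℂ) 2) : ∀ _, ℂ) k‖ ≤ ‖((adjoint (Rinv - adjoint R)) (e j)) k‖ := by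
    intro k
    rcases lt_trichotomy k j with h | h | h
    · rw [hx2 k, hQtri j k h, hsing j k (Nat.ne_of_gt h), sub_zero, map_zero, norm_zero]
      exact norm_nonneg _
    · subst h
      rw [hnyj, hx2 k, hsingself k, ← hqdef, hq]
      have : ((s⁻¹ : ℝ) : ℂ) - 1 = ((s⁻¹ - 1 : ℝ) : ℂ) := by push_cast; ring
      rw [this, Complex.conj_ofReal, Complex.norm_real, Real.norm_eq_abs]
      exact (diag_ineq hs).2
    · rw [hx2 k, hy k, hsing j k (Nat.ne_of_lt h), hRtri' k j h, sub_zero, sub_zero]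
  constructor
  · exact max_le (norm_dom _ _ hdom1) (norm_dom _ _ hdom2)
  -- Part 2
  · have hC2 : 0 < 1 - ‖C‖^2 := by nlinarith [norm_nonneg C]
    set t : ℝ := Real.sqrt (1 - ‖C‖^2) with htdef
    have ht : 0 < t := Real.sqrt_pos.mpr hC2
    -- factorization of Rinv - adjoint R
    have hD : Rinv - adjoint R = adjoint C ∘L (C ∘L Rinv) := by
      have h1 : (adjoint R ∘L R) ∘L Rinv + (adjoint C ∘L C) ∘L Rinv = Rinv := by
        rw [← ContinuousLinearMap.add_comp]
        rw [show adjoint R ∘L R + adjoint C ∘L C = 1 by rw [hM]; abel]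
        ext x
        simp
      have h2 : (adjoint R ∘L R) ∘L Rinv = adjoint R := by
        rw [ContinuousLinearMap.comp_assoc, hRinv.1]
        ext x
        simp
      rw [h2] at h1
      conv_lhs => rw [← h1]
      rw [add_sub_cancel_left, ContinuousLinearMap.comp_assoc]
    have happly : (adjoint (Rinv - adjoint R)) (lp.single 2 j (1:ℂ))
        = (adjoint Rinv) ((adjoint C) (C (lp.single 2 j (1:ℂ)))) := by
      rw [hD, adjoint_comp, adjoint_comp, adjoint_adjoint]
      rfl
    -- lower bound for R
    have hRlow : ∀ x : lp (fun _ : ℕ => ℂ) 2, (1 - ‖C‖^2) * ‖x‖^2 ≤ ‖R x‖^2 := by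
      intro x
      have e1 : (inner ℂ (R x) (R x) : ℂ) = (inner ℂ x x : ℂ) - inner ℂ (C x) (C x) := by
        rw [← adjoint_inner_right]
        have : (adjoint R) (R x) = x - (adjoint C) (C x) := by
          have := congrFun (congrArg (fun (A : lp (fun _ : ℕ => ℂ) 2 →L[ℂ] lp (fun _ : ℕ => ℂ) 2)
            => (A : lp (fun _ : ℕ => ℂ) 2 → lp (fun _ : ℕ => ℂ) 2)) hM) x
          simpa using this
        rw [this, inner_sub_right, adjoint_inner_right]
      have h1 : ‖R x‖^2 = ‖x‖^2 - ‖C x‖^2 := by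
        have h0 := congrArg (RCLike.re (K := ℂ)) e1
        rwa [map_sub, inner_self_eq_norm_sq (𝕜 := ℂ), inner_self_eq_norm_sq (𝕜 := ℂ),
          inner_self_eq_norm_sq (𝕜 := ℂ)] at h0
      have h2 : ‖C x‖ ≤ ‖C‖ * ‖x‖ := le_opNorm C x
      nlinarith [norm_nonneg (C x), norm_nonneg x, norm_nonneg C]
    -- norm bound for Rinv
    have hRinvnorm : ‖Rinv‖ ≤ t⁻¹ := by
      refine opNorm_le_bound Rinv (by positivity) fun y => ?_
      have h2 := hRlow (Rinv y)
      have h3 : R (Rinv y) = y := by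
        have := congrFun (congrArg (fun (A : lp (fun _ : ℕ => ℂ) 2 →L[ℂ] lp (fun _ : ℕ => ℂ) 2)
          => (A : lp (fun _ : ℕ => ℂ) 2 → lp (fun _ : ℕ => ℂ) 2)) hRinv.1) y
        simpa using this
      rw [h3] at h2
      have h4 : (t * ‖Rinv y‖)^2 ≤ ‖y‖^2 := by
        rw [mul_pow, htdef, Real.sq_sqrt hC2.le]
        exact h2
      have h5 : t * ‖Rinv y‖ ≤ ‖y‖ :=
        (pow_le_pow_iff_left₀ (by positivity) (norm_nonneg y) two_ne_zero).mp h4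
      rw [inv_mul_eq_div, le_div_iff₀ ht]
      linarith [h5]
    have hCej : Real.sqrt (ε j) = ‖C (lp.single 2 j (1:ℂ))‖ := by
      rw [hε j, Real.sqrt_sq (norm_nonneg _)]
    calc ‖(adjoint (Rinv - adjoint R)) (lp.single 2 j (1:ℂ))‖
        = ‖(adjoint Rinv) ((adjoint C) (C (lp.single 2 j (1:ℂ))))‖ := by rw [happly]
      _ ≤ ‖adjoint Rinv‖ * ‖(adjoint C) (C (lp.single 2 j (1:ℂ)))‖ := le_opNorm _ _
      _ ≤ ‖adjoint Rinv‖ * (‖adjoint C‖ * ‖C (lp.single 2 j (1:ℂ))‖) := by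
          gcongr
          exact le_opNorm _ _
      _ = ‖Rinv‖ * (‖C‖ * ‖C (lp.single 2 j (1:ℂ))‖) := by
          rw [ContinuousLinearMap.adjoint.norm_map, ContinuousLinearMap.adjoint.norm_map]
      _ ≤ t⁻¹ * (‖C‖ * ‖C (lp.single 2 j (1:ℂ))‖) := by
          gcongr
      _ = Real.sqrt (ε j) * ‖C‖ / t := by
          rw [hCej, div_eq_mul_inv]
          ring
end

section
/- For all integers 0 ≤ j ≤ n: max( |R_{j,n} − δ_{j,n}| , |(R⁻¹)_{j,n} − δ_{j,n}| ) ≤ √(ε_j · ε_n) / (1 − ‖C‖²), where R_{j,n} = ⟨R e_n, e_j⟩ and (R⁻¹)_{j,n} = ⟨R⁻¹ e_n, e_j⟩. -/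
open ContinuousLinearMap

noncomputable section GrunskyAux

abbrev Hgr := lp (fun _ : ℕ => ℂ) 2

def ee (n : ℕ) : Hgr := lp.single 2 n (1:ℂ)

lemma ee_def (n : ℕ) : lp.single 2 n (1:ℂ) = ee n := rfl

lemma inner_ee_left (n : ℕ) (f : Hgr) : (inner ℂ (ee n) f : ℂ) = f n := by
  rw [ee, lp.inner_single_left, RCLike.inner_apply, map_one, mul_one]

lemma ee_apply (n j : ℕ) : (ee n : ∀ _ : ℕ, ℂ) j = if j = n then 1 else 0 := by
  rw [ee, lp.single_apply]; split_ifs with h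
  · subst h; simp
  · simp [h]

lemma norm_ee (n : ℕ) : ‖ee n‖ = 1 := by
  have := lp.norm_single (p := 2) (E := fun _ : ℕ => ℂ) (by norm_num) n (1:ℂ)
  simpa [ee] using this

lemma inner_ee_ee (j n : ℕ) : (inner ℂ (ee j) (ee n) : ℂ) = if j = n then 1 else 0 := by
  rw [inner_ee_left, ee_apply]

lemma coord_smul (c : ℂ) (f : Hgr) (j : ℕ) : (c • f : Hgr) j = c * f j := by
  rw [lp.coeFn_smul, Pi.smul_apply, smul_eq_mul]

lemma coord_sum {ι : Type*} (s : Finset ι) (f : ι → Hgr) (j : ℕ) :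
    ((∑ i ∈ s, f i : Hgr) : ∀ _ : ℕ, ℂ) j = ∑ i ∈ s, (f i : ∀ _ : ℕ, ℂ) j := by
  rw [lp.coeFn_sum, Finset.sum_apply]

section main

variable (C R Rinv : Hgr →L[ℂ] Hgr) (hC : ‖C‖ < 1)
  (hRtri : ∀ j k : ℕ, k < j → (inner ℂ (ee j) (R (ee k)) : ℂ) = 0)
  (hRdne : ∀ n : ℕ, (inner ℂ (ee n) (R (ee n)) : ℂ) ≠ 0)
  (hRconj : ∀ n : ℕ, (starRingEnd ℂ) (inner ℂ (ee n) (R (ee n)) : ℂ)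
      = (inner ℂ (ee n) (R (ee n)) : ℂ))
  (hM : adjoint R ∘L R = 1 - adjoint C ∘L C)
  (hRinv1 : R ∘L Rinv = 1) (hRinv2 : Rinv ∘L R = 1)

include hRtri hRdne hRinv1 hRinv2 in
lemma lemA : ∀ n j, n < j → (Rinv (ee n) : ∀ _ : ℕ, ℂ) j = 0 := by
  intro n
  induction n using Nat.strong_induction_on with
  | _ n IH =>
    intro j hj
    set w := R (ee n) with hw
    have hRRinv : ∀ m, R (Rinv (ee m)) = ee m := by
      intro m
      have := congrArg (fun A : Hgr →L[ℂ] Hgr => A (ee m)) hRinv1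
      simpa using this
    have hwcoord : ∀ i, n < i → (w : ∀ _ : ℕ, ℂ) i = 0 := by
      intro i hi
      have := hRtri i n hi
      rwa [inner_ee_left] at this
    have hwn : (w : ∀ _ : ℕ, ℂ) n ≠ 0 := by
      have := hRdne n
      rwa [inner_ee_left] at this
    set u : Hgr := ((w : ∀ _ : ℕ, ℂ) n)⁻¹ •
      (ee n - ∑ i ∈ Finset.range n, (w : ∀ _ : ℕ, ℂ) i • Rinv (ee i)) with hu
    have hsplit : w - ∑ i ∈ Finset.range n, (w : ∀ _ : ℕ, ℂ) i • ee i
        = (w : ∀ _ : ℕ, ℂ) n • ee n := by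
      apply lp.ext; funext m
      rw [lp.coeFn_sub, Pi.sub_apply, coord_sum, coord_smul]
      simp only [coord_smul, ee_apply]
      rcases lt_trichotomy m n with hmn | hmn | hmn
      · rw [if_neg hmn.ne, Finset.sum_eq_single m]
        · rw [if_pos rfl, mul_one, mul_zero, sub_self]
        · intro i _ him; rw [if_neg (Ne.symm him), mul_zero]
        · intro hm; exact absurd (Finset.mem_range.mpr hmn) hm
      · subst hmn
        rw [if_pos rfl, mul_one, Finset.sum_eq_zero, sub_zero]
        intro i hi
        rw [if_neg (Finset.mem_range.mp hi).ne', mul_zero]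
      · rw [if_neg hmn.ne', mul_zero, hwcoord m hmn, Finset.sum_eq_zero, sub_zero]
        intro i hi
        rw [if_neg (((Finset.mem_range.mp hi).trans hmn).ne'), mul_zero]
    have hRu : R u = ee n := by
      rw [hu, map_smul, map_sub, map_sum]
      simp only [map_smul, hRRinv]
      rw [← hw, hsplit, smul_smul, inv_mul_cancel₀ hwn, one_smul]
    have hux : Rinv (ee n) = u := by
      have h2 := congrArg (fun A : Hgr →L[ℂ] Hgr => A u) hRinv2
      simp only [comp_apply, one_apply] at h2
      rw [← hRu]
      exact h2
    rw [hux, hu, coord_smul, lp.coeFn_sub, Pi.sub_apply, coord_sum]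
    rw [ee_apply, if_neg (by omega : j ≠ n), Finset.sum_eq_zero, sub_zero, mul_zero]
    intro i hi
    have hin := Finset.mem_range.mp hi
    rw [coord_smul, IH i hin j (by omega), mul_zero]

include hM hRinv1 in
lemma lemB (n j : ℕ) :
    (Rinv (ee n) : ∀ _ : ℕ, ℂ) j
      = (starRingEnd ℂ) (inner ℂ (ee n) (R (ee j)) : ℂ)
        + (inner ℂ (C (ee j)) (C (Rinv (ee n))) : ℂ) := by
  set x := Rinv (ee n) with hx
  have hRx : R x = ee n := by
    have := congrArg (fun A : Hgr →L[ℂ] Hgr => A (ee n)) hRinv1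
    simpa [hx] using this
  have h1 : x = adjoint R (ee n) + adjoint C (C x) := by
    have h := congrArg (fun A : Hgr →L[ℂ] Hgr => A x) hM
    simp only [comp_apply, sub_apply, one_apply] at h
    rw [hRx] at h
    rw [h]
    abel
  calc (x : ∀ _ : ℕ, ℂ) j = inner ℂ (ee j) x := (inner_ee_left j x).symm
    _ = (inner ℂ (ee j) (adjoint R (ee n)) : ℂ) + inner ℂ (ee j) (adjoint C (C x)) := by
        nth_rewrite 1 [h1]
        rw [inner_add_right]
    _ = (starRingEnd ℂ) (inner ℂ (ee n) (R (ee j)) : ℂ) + (inner ℂ (C (ee j)) (C x) : ℂ) := by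
        rw [adjoint_inner_right, adjoint_inner_right, ← inner_conj_symm]

include hRtri hRdne hRconj hM hRinv1 hRinv2 in
lemma lemC (n : ℕ) :
    Rinv (ee n) = (inner ℂ (ee n) (R (ee n)) : ℂ) • ee n
      + ∑ i ∈ Finset.range (n+1), (inner ℂ (C (ee i)) (C (Rinv (ee n))) : ℂ) • ee i := by
  apply lp.ext; funext j
  rw [lp.coeFn_add, Pi.add_apply, coord_smul, coord_sum]
  simp only [coord_smul, ee_apply]
  rcases lt_trichotomy j n with h | h | h
  · rw [lemB C R Rinv hM hRinv1 n j, hRtri n j h, map_zero, zero_add, if_neg h.ne, mul_zero,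
      zero_add, Finset.sum_eq_single j]
    · rw [if_pos rfl, mul_one]
    · intro i _ him; rw [if_neg (Ne.symm him), mul_zero]
    · intro hm; exact absurd (Finset.mem_range.mpr (by omega)) hm
  · subst h
    rw [lemB C R Rinv hM hRinv1 j j, hRconj j, if_pos rfl, mul_one, Finset.sum_eq_single j]
    · rw [if_pos rfl, mul_one]
    · intro i _ him; rw [if_neg (Ne.symm him), mul_zero]
    · intro hm; exact absurd (Finset.mem_range.mpr (by omega)) hm
  · rw [lemA R Rinv hRtri hRdne hRinv1 hRinv2 n j h, if_neg h.ne', mul_zero, zero_add,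
      Finset.sum_eq_zero]
    intro i hi
    have := Finset.mem_range.mp hi
    rw [if_neg (by omega : j ≠ i), mul_zero]

include hM in
lemma lemD (n : ℕ) : ‖R (ee n)‖ ≤ 1 := by
  have h1 : (inner ℂ (R (ee n)) (R (ee n)) : ℂ)
      = (inner ℂ (ee n) (ee n) : ℂ) - inner ℂ (C (ee n)) (C (ee n)) := by
    have h := congrArg (fun A : Hgr →L[ℂ] Hgr => A (ee n)) hM
    simp only [comp_apply, sub_apply, one_apply] at h
    rw [← adjoint_inner_right, h, inner_sub_right, adjoint_inner_right]; rfl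
  have h2 := congrArg (RCLike.re (K := ℂ)) h1
  simp only [map_sub] at h2
  rw [inner_self_eq_norm_sq, inner_self_eq_norm_sq, inner_self_eq_norm_sq, norm_ee] at h2
  nlinarith [norm_nonneg (R (ee n)), norm_nonneg (C (ee n))]

include hM in
lemma lemD' (n : ℕ) : ‖(inner ℂ (ee n) (R (ee n)) : ℂ)‖ ≤ 1 := by
  calc ‖(inner ℂ (ee n) (R (ee n)) : ℂ)‖ ≤ ‖ee n‖ * ‖R (ee n)‖ := norm_inner_le_norm _ _
    _ ≤ 1 := by rw [norm_ee, one_mul]; exact lemD C R hM n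

set_option maxHeartbeats 1000000 in
include hC hRtri hRdne hRconj hM hRinv1 hRinv2 in
lemma lemE (n : ℕ) : ‖C (Rinv (ee n))‖ ≤ ‖C (ee n)‖ / (1 - ‖C‖^2) := by
  have ha : 0 < 1 - ‖C‖^2 := by nlinarith [norm_nonneg C]
  set x := Rinv (ee n) with hxdef
  rcases eq_or_lt_of_le (norm_nonneg (C x)) with h0 | hpos
  · rw [← h0]; positivity
  set r := (inner ℂ (ee n) (R (ee n)) : ℂ) with hr
  set q := ∑ i ∈ Finset.range (n+1), (inner ℂ (C (ee i)) (C x) : ℂ) • ee i with hq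
  have hxrq : x = r • ee n + q := lemC C R Rinv hRtri hRdne hRconj hM hRinv1 hRinv2 n
  set z := adjoint C (C x) with hz
  have hzc : ∀ i, (inner ℂ (C (ee i)) (C x) : ℂ) = (z : ∀ _ : ℕ, ℂ) i := by
    intro i
    rw [← inner_ee_left, hz, adjoint_inner_right]
  have bound2 : RCLike.re (K := ℂ) (inner ℂ (C x) (C q) : ℂ) ≤ ‖C‖^2 * ‖C x‖^2 := by
    have e3 : (inner ℂ (C x) (C q) : ℂ) = inner ℂ z q := by
      rw [hz, adjoint_inner_left]
    have e4 : (inner ℂ z q : ℂ)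
        = ∑ i ∈ Finset.range (n+1), ((z : ∀ _ : ℕ, ℂ) i * (starRingEnd ℂ) ((z : ∀ _ : ℕ, ℂ) i)) := by
      rw [hq, inner_sum]
      refine Finset.sum_congr rfl fun i _ => ?_
      rw [inner_smul_right, hzc i, ← inner_conj_symm, inner_ee_left]
    have e5 : RCLike.re (K := ℂ) (inner ℂ z q : ℂ)
        = ∑ i ∈ Finset.range (n+1), ‖(z : ∀ _ : ℕ, ℂ) i‖^2 := by
      rw [e4, map_sum]
      refine Finset.sum_congr rfl fun i _ => ?_
      rw [Complex.mul_conj]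
      simp [Complex.normSq_eq_norm_sq, ← Complex.ofReal_pow]
    have e6 : ∑ i ∈ Finset.range (n+1), ‖(z : ∀ _ : ℕ, ℂ) i‖^2 ≤ ‖z‖^2 := by
      have h7 := lp.sum_rpow_le_norm_rpow (p := 2) (E := fun _ : ℕ => ℂ)
        (by norm_num) z (Finset.range (n+1))
      have h8 : ((2 : ENNReal)).toReal = ((2:ℕ) : ℝ) := by norm_num
      rw [h8] at h7
      simp only [Real.rpow_natCast] at h7
      exact_mod_cast h7
    have e7 : ‖z‖ ≤ ‖C‖ * ‖C x‖ := by
      calc ‖z‖ ≤ ‖adjoint C‖ * ‖C x‖ := le_opNorm _ _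
        _ = ‖C‖ * ‖C x‖ := by rw [LinearIsometryEquiv.norm_map]
    rw [e3, e5]
    calc ∑ i ∈ Finset.range (n+1), ‖(z : ∀ _ : ℕ, ℂ) i‖^2 ≤ ‖z‖^2 := e6
      _ ≤ (‖C‖ * ‖C x‖)^2 := by
          apply sq_le_sq' _ e7
          nlinarith [norm_nonneg z, norm_nonneg C, norm_nonneg (C x),
            mul_nonneg (norm_nonneg C) (norm_nonneg (C x))]
      _ = ‖C‖^2 * ‖C x‖^2 := by ring
  have bound1 : RCLike.re (K := ℂ) (r * (inner ℂ (C x) (C (ee n)) : ℂ)) ≤ ‖C x‖ * ‖C (ee n)‖ := by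
    calc RCLike.re (K := ℂ) (r * (inner ℂ (C x) (C (ee n)) : ℂ))
        ≤ ‖r * (inner ℂ (C x) (C (ee n)) : ℂ)‖ := RCLike.re_le_norm _
      _ = ‖r‖ * ‖(inner ℂ (C x) (C (ee n)) : ℂ)‖ := norm_mul _ _
      _ ≤ 1 * (‖C x‖ * ‖C (ee n)‖) := by
          apply mul_le_mul (lemD' C R hM n) (norm_inner_le_norm _ _) (norm_nonneg _)
          norm_num
      _ = ‖C x‖ * ‖C (ee n)‖ := one_mul _
  have key : ‖C x‖^2 ≤ ‖C x‖ * ‖C (ee n)‖ + ‖C‖^2 * ‖C x‖^2 := by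
    have e2 : (inner ℂ (C x) (C x) : ℂ)
        = r * inner ℂ (C x) (C (ee n)) + inner ℂ (C x) (C q) := by
      nth_rewrite 2 [hxrq]
      rw [map_add, inner_add_right, map_smul, inner_smul_right]
    calc (‖C x‖:ℝ)^2 = RCLike.re (K := ℂ) (inner ℂ (C x) (C x) : ℂ) :=
          (inner_self_eq_norm_sq _).symm
      _ = RCLike.re (K := ℂ) (r * (inner ℂ (C x) (C (ee n)) : ℂ))
            + RCLike.re (K := ℂ) (inner ℂ (C x) (C q) : ℂ) := by rw [e2, map_add]
      _ ≤ ‖C x‖ * ‖C (ee n)‖ + ‖C‖^2 * ‖C x‖^2 := add_le_add bound1 bound2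
  rw [le_div_iff₀ ha]
  nlinarith [key, hpos]

include hRtri hRdne hRconj hM hRinv1 hRinv2 in
lemma lemF (n : ℕ) :
    (inner ℂ (ee n) (R (ee n)) : ℂ) * (inner ℂ (ee n) (Rinv (ee n)) : ℂ) = 1 := by
  set x := Rinv (ee n) with hxdef
  set r := (inner ℂ (ee n) (R (ee n)) : ℂ) with hr
  set w := (inner ℂ (C (ee n)) (C x) : ℂ) with hw
  have hRx : R x = ee n := by
    have := congrArg (fun A : Hgr →L[ℂ] Hgr => A (ee n)) hRinv1
    simpa [hxdef] using this
  have hxrq : x = r • ee n + ∑ i ∈ Finset.range (n+1), (inner ℂ (C (ee i)) (C x) : ℂ) • ee i :=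
    lemC C R Rinv hRtri hRdne hRconj hM hRinv1 hRinv2 n
  have h1 : (inner ℂ (ee n) x : ℂ) = r + w := by
    nth_rewrite 1 [hxrq]
    rw [inner_add_right, inner_smul_right, inner_ee_ee, if_pos rfl, mul_one, inner_sum]
    simp only [inner_smul_right, inner_ee_ee]
    rw [Finset.sum_range_succ, Finset.sum_eq_zero, zero_add, if_pos rfl, mul_one, ← hw]
    intro i hi
    rw [if_neg (Finset.mem_range.mp hi).ne', mul_zero]
  have h2 : (1:ℂ) = r * r + w * r := by
    have hone : (inner ℂ (ee n) (R x) : ℂ) = 1 := by rw [hRx, inner_ee_ee, if_pos rfl]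
    rw [← hone]
    nth_rewrite 1 [hxrq]
    rw [map_add, map_smul, inner_add_right, inner_smul_right, map_sum, inner_sum]
    simp only [map_smul, inner_smul_right]
    rw [← hr, Finset.sum_range_succ, Finset.sum_eq_zero, zero_add, ← hw, ← hr]
    intro i hi
    rw [hRtri n i (Finset.mem_range.mp hi), mul_zero]
  have h3 : r * (r + w) = 1 := by
    calc r * (r + w) = r * r + w * r := by ring
      _ = 1 := h2.symm
  rw [h1]
  exact h3

end main

set_option maxHeartbeats 2000000 in
set_option synthInstance.maxHeartbeats 400000 in
theorem grunsky_entry_bounds'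
    (C R Rinv : lp (fun _ : ℕ => ℂ) 2 →L[ℂ] lp (fun _ : ℕ => ℂ) 2)
    (hC : ‖C‖ < 1)
    (hRtri : ∀ j k : ℕ, k < j → (inner ℂ (lp.single 2 j (1:ℂ)) (R (lp.single 2 k (1:ℂ))) : ℂ) = 0)
    (hRdiagRe : ∀ n : ℕ,
      0 < (inner ℂ (lp.single 2 n (1:ℂ)) (R (lp.single 2 n (1:ℂ))) : ℂ).re)
    (hRdiagIm : ∀ n : ℕ,
      (inner ℂ (lp.single 2 n (1:ℂ)) (R (lp.single 2 n (1:ℂ))) : ℂ).im = 0)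
    (hM : adjoint R ∘L R = 1 - adjoint C ∘L C)
    (hRinv : R ∘L Rinv = 1 ∧ Rinv ∘L R = 1)
    (ε : ℕ → ℝ) (hε : ∀ n, ε n = ‖C (lp.single 2 n (1:ℂ))‖^2) :
    ∀ j n : ℕ, j ≤ n →
      max (‖((inner ℂ (lp.single 2 j (1:ℂ)) (R (lp.single 2 n (1:ℂ))) : ℂ)
              - if j = n then 1 else 0)‖)
          (‖((inner ℂ (lp.single 2 j (1:ℂ)) (Rinv (lp.single 2 n (1:ℂ))) : ℂ)
              - if j = n then 1 else 0)‖)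
        ≤ Real.sqrt (ε j * ε n) / (1 - ‖C‖^2) := by
  simp only [ee_def] at hRtri hRdiagRe hRdiagIm hε ⊢
  obtain ⟨hRinv1, hRinv2⟩ := hRinv
  intro j n hjn
  have hRdne : ∀ m : ℕ, (inner ℂ (ee m) (R (ee m)) : ℂ) ≠ 0 := by
    intro m h0
    have := hRdiagRe m
    rw [h0] at this
    simp at this
  have hRconj : ∀ m : ℕ, (starRingEnd ℂ) (inner ℂ (ee m) (R (ee m)) : ℂ)
      = (inner ℂ (ee m) (R (ee m)) : ℂ) := by
    intro m
    exact Complex.conj_eq_iff_im.mpr (hRdiagIm m)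
  have ha : 0 < 1 - ‖C‖^2 := by nlinarith [norm_nonneg C]
  have hsqrt : Real.sqrt (ε j * ε n) = ‖C (ee j)‖ * ‖C (ee n)‖ := by
    rw [hε, hε, show ‖C (ee j)‖^2 * ‖C (ee n)‖^2 = (‖C (ee j)‖ * ‖C (ee n)‖)^2 by ring,
      Real.sqrt_sq (by positivity)]
  have hE : ∀ m : ℕ, ‖C (Rinv (ee m))‖ ≤ ‖C (ee m)‖ / (1 - ‖C‖^2) :=
    lemE C R Rinv hC hRtri hRdne hRconj hM hRinv1 hRinv2
  rcases eq_or_lt_of_le hjn with rfl | hlt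
  · -- diagonal case
    rw [if_pos rfl]
    set r := (inner ℂ (ee j) (R (ee j)) : ℂ) with hrdef
    set t := (inner ℂ (ee j) (Rinv (ee j)) : ℂ) with htdef
    have hprod : r * t = 1 := lemF C R Rinv hRtri hRdne hRconj hM hRinv1 hRinv2 j
    have hB : t = r + (inner ℂ (C (ee j)) (C (Rinv (ee j))) : ℂ) := by
      have h1 : t = (Rinv (ee j) : ∀ _ : ℕ, ℂ) j := inner_ee_left j _
      rw [h1, lemB C R Rinv hM hRinv1 j j, hRconj j, ← hrdef]
    set ρ := r.re with hρdef
    have hρ0 : 0 < ρ := hRdiagRe j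
    have hrρ : r = (ρ:ℂ) := by
      apply Complex.ext
      · simp [hρdef]
      · rw [Complex.ofReal_im]
        exact hRdiagIm j
    have hρ1 : ρ ≤ 1 := by
      have h2 := lemD' C R hM j
      calc ρ ≤ ‖r‖ := Complex.re_le_norm r
        _ ≤ 1 := h2
    have ht : t = ((ρ⁻¹ : ℝ) : ℂ) := by
      have h4 : t = r⁻¹ := (inv_eq_of_mul_eq_one_right hprod).symm
      rw [h4, hrρ, ← Complex.ofReal_inv]
    set K := ‖C (ee j)‖ * (‖C (ee j)‖ / (1 - ‖C‖^2)) with hKdef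
    have hK0 : 0 ≤ K := by positivity
    have hKnum : ‖t - r‖ ≤ K := by
      rw [hB, add_sub_cancel_left]
      calc ‖(inner ℂ (C (ee j)) (C (Rinv (ee j))) : ℂ)‖
          ≤ ‖C (ee j)‖ * ‖C (Rinv (ee j))‖ := norm_inner_le_norm _ _
        _ ≤ K := mul_le_mul_of_nonneg_left (hE j) (norm_nonneg _)
    have habs : |ρ⁻¹ - ρ| ≤ K := by
      have h5 : t - r = ((ρ⁻¹ - ρ : ℝ) : ℂ) := by
        rw [ht, hrρ]
        push_cast
        ring
      rw [h5] at hKnum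
      rwa [Complex.norm_real, Real.norm_eq_abs] at hKnum
    have hgoal : Real.sqrt (ε j * ε j) / (1 - ‖C‖^2) = K := by
      rw [hsqrt, hKdef, mul_div_assoc]
    rw [hgoal]
    have h6 := abs_le.mp habs
    have hiv : ρ * ρ⁻¹ = 1 := mul_inv_cancel₀ hρ0.ne'
    apply max_le
    · have h7 : r - 1 = ((ρ - 1 : ℝ) : ℂ) := by rw [hrρ]; push_cast; ring
      rw [h7, Complex.norm_real, Real.norm_eq_abs]
      rw [abs_le]
      constructor
      · nlinarith [h6.2]
      · nlinarith
    · have h7 : t - 1 = ((ρ⁻¹ - 1 : ℝ) : ℂ) := by rw [ht]; push_cast; ring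
      rw [h7, Complex.norm_real, Real.norm_eq_abs]
      rw [abs_le]
      constructor
      · nlinarith [h6.2]
      · nlinarith [h6.2]
  · -- off-diagonal case
    rw [if_neg hlt.ne, sub_zero, sub_zero]
    have hbD : Real.sqrt (ε j * ε n) / (1 - ‖C‖^2)
        = (‖C (ee j)‖ / (1 - ‖C‖^2)) * ‖C (ee n)‖ := by
      rw [hsqrt]
      field_simp
    apply max_le
    · -- R entry
      have hRy : R (Rinv (ee j)) = ee j := by
        have := congrArg (fun A : Hgr →L[ℂ] Hgr => A (ee j)) hRinv1
        simpa using this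
      have hMn : adjoint R (R (ee n)) = ee n - adjoint C (C (ee n)) := by
        have h := congrArg (fun A : Hgr →L[ℂ] Hgr => A (ee n)) hM
        simpa using h
      have hzero : (inner ℂ (Rinv (ee j)) (ee n) : ℂ) = 0 := by
        rw [← inner_conj_symm, inner_ee_left,
          lemA R Rinv hRtri hRdne hRinv1 hRinv2 j n hlt, map_zero]
      have hval : (inner ℂ (ee j) (R (ee n)) : ℂ)
          = - (inner ℂ (C (Rinv (ee j))) (C (ee n)) : ℂ) := by
        calc (inner ℂ (ee j) (R (ee n)) : ℂ)
            = inner ℂ (R (Rinv (ee j))) (R (ee n)) := by rw [hRy]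
          _ = inner ℂ (Rinv (ee j)) (adjoint R (R (ee n))) := (adjoint_inner_right _ _ _).symm
          _ = (inner ℂ (Rinv (ee j)) (ee n) : ℂ)
                - inner ℂ (Rinv (ee j)) (adjoint C (C (ee n))) := by
              rw [hMn, inner_sub_right]
          _ = - (inner ℂ (C (Rinv (ee j))) (C (ee n)) : ℂ) := by
              rw [hzero, adjoint_inner_right, zero_sub]
      rw [hval, norm_neg, hbD]
      calc ‖(inner ℂ (C (Rinv (ee j))) (C (ee n)) : ℂ)‖
          ≤ ‖C (Rinv (ee j))‖ * ‖C (ee n)‖ := norm_inner_le_norm _ _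
        _ ≤ (‖C (ee j)‖ / (1 - ‖C‖^2)) * ‖C (ee n)‖ :=
            mul_le_mul_of_nonneg_right (hE j) (norm_nonneg _)
    · -- Rinv entry
      have h1 : (inner ℂ (ee j) (Rinv (ee n)) : ℂ) = (Rinv (ee n) : ∀ _ : ℕ, ℂ) j :=
        inner_ee_left j _
      rw [h1, lemB C R Rinv hM hRinv1 n j, hRtri n j hlt, map_zero, zero_add]
      rw [hsqrt, mul_div_assoc]
      calc ‖(inner ℂ (C (ee j)) (C (Rinv (ee n))) : ℂ)‖
          ≤ ‖C (ee j)‖ * ‖C (Rinv (ee n))‖ := norm_inner_le_norm _ _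
        _ ≤ ‖C (ee j)‖ * (‖C (ee n)‖ / (1 - ‖C‖^2)) :=
            mul_le_mul_of_nonneg_left (hE n) (norm_nonneg _)

end GrunskyAux

/-- Theorem 2.4, entrywise estimates: for `0 ≤ j ≤ n`,
`max(|R_{j,n} − δ_{j,n}|, |(R⁻¹)_{j,n} − δ_{j,n}|) ≤ √(ε_j ε_n)/(1 − ‖C‖²)`. -/
theorem grunsky_entry_bounds
    (C R Rinv : lp (fun _ : ℕ => ℂ) 2 →L[ℂ] lp (fun _ : ℕ => ℂ) 2)
    (hC : ‖C‖ < 1)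
    (hRtri : ∀ j k : ℕ, k < j → (inner ℂ (lp.single 2 j (1:ℂ)) (R (lp.single 2 k (1:ℂ))) : ℂ) = 0)
    (hRdiagRe : ∀ n : ℕ,
      0 < (inner ℂ (lp.single 2 n (1:ℂ)) (R (lp.single 2 n (1:ℂ))) : ℂ).re)
    (hRdiagIm : ∀ n : ℕ,
      (inner ℂ (lp.single 2 n (1:ℂ)) (R (lp.single 2 n (1:ℂ))) : ℂ).im = 0)
    (hM : adjoint R ∘L R = 1 - adjoint C ∘L C)
    (hRinv : R ∘L Rinv = 1 ∧ Rinv ∘L R = 1)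
    (ε : ℕ → ℝ) (hε : ∀ n, ε n = ‖C (lp.single 2 n (1:ℂ))‖^2) :
    ∀ j n : ℕ, j ≤ n →
      max (‖((inner ℂ (lp.single 2 j (1:ℂ)) (R (lp.single 2 n (1:ℂ))) : ℂ)
              - if j = n then 1 else 0)‖)
          (‖((inner ℂ (lp.single 2 j (1:ℂ)) (Rinv (lp.single 2 n (1:ℂ))) : ℂ)
              - if j = n then 1 else 0)‖)
        ≤ Real.sqrt (ε j * ε n) / (1 - ‖C‖^2) :=
  grunsky_entry_bounds' C R Rinv hC hRtri hRdiagRe hRdiagIm hM hRinv ε hε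
end

section
/- For every n ≥ 0 one has ε_n = 1 − ‖R e_n‖² and the chain of inequalities: ε_n ≤ 1 − R_{n,n}² ≤ 1/R_{n,n} − R_{n,n} ≤ ε_n / (1 − ‖C‖²), where R_{n,n} = ⟨R e_n, e_n⟩. -/
open ContinuousLinearMap

lemma aux_inner_single (f : lp (fun _ : ℕ => ℂ) 2) (n : ℕ) :
    (inner ℂ (lp.single 2 n (1:ℂ)) f : ℂ) = f n := by
  rw [lp.inner_single_left]
  simp [RCLike.inner_apply]

lemma aux_norm_single (n : ℕ) : ‖(lp.single 2 n (1:ℂ) : lp (fun _ : ℕ => ℂ) 2)‖ = 1 := by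
  have := lp.norm_single (p := 2) (E := fun _ : ℕ => ℂ) (by norm_num) n (1:ℂ)
  simpa using this

lemma aux_decomp (f : lp (fun _ : ℕ => ℂ) 2) (k : ℕ) (h : ∀ j, k < j → f j = 0) :
    f = ∑ j ∈ Finset.range (k+1), lp.single 2 j (f j) := by
  apply lp.ext
  funext i
  simp only [lp.coeFn_sum, Finset.sum_apply, lp.single_apply]
  rcases le_or_gt i k with hik | hik
  · rw [Finset.sum_eq_single i]
    · simp
    · intro b _ hb
      rw [Pi.single_eq_of_ne (Ne.symm hb)]
    · intro hi; exact absurd (Finset.mem_range.2 (Nat.lt_succ_of_le hik)) hi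
  · rw [h i hik]
    symm
    apply Finset.sum_eq_zero
    intro b hb
    rw [Pi.single_eq_of_ne]
    simp only [Finset.mem_range] at hb
    omega

set_option maxHeartbeats 4000000

/-- Remark 2.5: `ε_n = 1 − ‖R e_n‖²` and
`ε_n ≤ 1 − R_{n,n}² ≤ 1/R_{n,n} − R_{n,n} ≤ ε_n/(1 − ‖C‖²)`. -/
theorem grunsky_diagonal_chain
    (C R Rinv : lp (fun _ : ℕ => ℂ) 2 →L[ℂ] lp (fun _ : ℕ => ℂ) 2)
    (hC : ‖C‖ < 1)
    (hRtri : ∀ j k : ℕ, k < j → (inner ℂ (lp.single 2 j (1:ℂ)) (R (lp.single 2 k (1:ℂ))) : ℂ) = 0)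
    (hRdiagRe : ∀ n : ℕ,
      0 < (inner ℂ (lp.single 2 n (1:ℂ)) (R (lp.single 2 n (1:ℂ))) : ℂ).re)
    (hRdiagIm : ∀ n : ℕ,
      (inner ℂ (lp.single 2 n (1:ℂ)) (R (lp.single 2 n (1:ℂ))) : ℂ).im = 0)
    (hM : adjoint R ∘L R = 1 - adjoint C ∘L C)
    (hRinv : R ∘L Rinv = 1 ∧ Rinv ∘L R = 1)
    (ε : ℕ → ℝ) (hε : ∀ n, ε n = ‖C (lp.single 2 n (1:ℂ))‖^2) :
    ∀ n : ℕ,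
      ε n = 1 - ‖R (lp.single 2 n (1:ℂ))‖^2 ∧
      ε n ≤ 1 - (inner ℂ (lp.single 2 n (1:ℂ)) (R (lp.single 2 n (1:ℂ))) : ℂ).re ^ 2 ∧
      1 - (inner ℂ (lp.single 2 n (1:ℂ)) (R (lp.single 2 n (1:ℂ))) : ℂ).re ^ 2
        ≤ 1 / (inner ℂ (lp.single 2 n (1:ℂ)) (R (lp.single 2 n (1:ℂ))) : ℂ).re
          - (inner ℂ (lp.single 2 n (1:ℂ)) (R (lp.single 2 n (1:ℂ))) : ℂ).re ∧
      1 / (inner ℂ (lp.single 2 n (1:ℂ)) (R (lp.single 2 n (1:ℂ))) : ℂ).re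
          - (inner ℂ (lp.single 2 n (1:ℂ)) (R (lp.single 2 n (1:ℂ))) : ℂ).re
        ≤ ε n / (1 - ‖C‖^2) := by
  intro n
  -- notation
  set e : ℕ → lp (fun _ : ℕ => ℂ) 2 := fun k => lp.single 2 k (1:ℂ) with he
  set d : ℝ := (inner ℂ (e n) (R (e n)) : ℂ).re with hd_def
  have hd0 : 0 < d := hRdiagRe n
  have hnorme : ∀ k, ‖e k‖ = 1 := fun k => aux_norm_single k
  -- (A) the fundamental norm identity
  have hnormx : ∀ x : lp (fun _ : ℕ => ℂ) 2, ‖R x‖^2 = ‖x‖^2 - ‖C x‖^2 := by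
    intro x
    have h0 := ContinuousLinearMap.ext_iff.1 hM x
    simp only [ContinuousLinearMap.comp_apply, ContinuousLinearMap.sub_apply,
      ContinuousLinearMap.one_apply] at h0
    have h5 : (inner ℂ (R x) (R x) : ℂ) = inner ℂ x x - inner ℂ (C x) (C x) := by
      rw [← adjoint_inner_right, h0, inner_sub_right, adjoint_inner_right]
    rw [inner_self_eq_norm_sq_to_K, inner_self_eq_norm_sq_to_K, inner_self_eq_norm_sq_to_K] at h5
    exact_mod_cast h5
  -- Part 1
  have part1 : ε n = 1 - ‖R (e n)‖^2 := by
    rw [hε n, hnormx (e n), hnorme n]; ring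
  -- Part 2
  have hdle : d ≤ ‖R (e n)‖ := by
    calc d ≤ ‖(inner ℂ (e n) (R (e n)) : ℂ)‖ := Complex.re_le_norm _
    _ = ‖(inner ℂ (e n) (R (e n)) : ℂ)‖ := rfl
    _ ≤ ‖e n‖ * ‖R (e n)‖ := norm_inner_le_norm _ _
    _ = ‖R (e n)‖ := by rw [hnorme n, one_mul]
  have part2 : ε n ≤ 1 - d^2 := by nlinarith [part1, hdle, hd0]
  -- Part 3
  have part3 : 1 - d^2 ≤ 1/d - d := by
    have key : (1/d - d - (1 - d^2)) * d = (1-d)^2 * (1+d) := by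
      field_simp; ring
    nlinarith [key, sq_nonneg (1-d), hd0, mul_nonneg (sq_nonneg (1-d)) (by linarith : (0:ℝ) ≤ 1 + d)]
  -- setup for part 4
  have hCnorm : (0:ℝ) ≤ ‖C‖ := norm_nonneg _
  have hδ : ‖C‖^2 < 1 := by nlinarith
  have hδpos : 0 < 1 - ‖C‖^2 := by linarith
  -- support of R (e k)
  have hsupp : ∀ k j, k < j → (R (e k) : ∀ _ : ℕ, ℂ) j = 0 := by
    intro k j hkj
    have h2 := aux_inner_single (R (e k)) j
    rw [← h2]
    exact hRtri j k hkj
  -- y and its properties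
  set y : lp (fun _ : ℕ => ℂ) 2 := adjoint Rinv (e n) with hy_def
  have hadj1 : adjoint R ∘L adjoint Rinv = 1 := by
    rw [← adjoint_comp, hRinv.2, ContinuousLinearMap.one_def, adjoint_id]
  have hadj2 : adjoint Rinv ∘L adjoint R = 1 := by
    rw [← adjoint_comp, hRinv.1, ContinuousLinearMap.one_def, adjoint_id]
  have hadjy : adjoint R y = e n := by
    have := congrArg (fun (A : lp (fun _ : ℕ => ℂ) 2 →L[ℂ] lp (fun _ : ℕ => ℂ) 2) => A (e n)) hadj1
    simpa using this
  -- key inner products with y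
  have hkey : ∀ k, (inner ℂ (R (e k)) y : ℂ)
      = ∑ j ∈ Finset.range (k+1), (starRingEnd ℂ) ((R (e k) : ∀ _ : ℕ, ℂ) j) * y j := by
    intro k
    conv_lhs => rw [aux_decomp (R (e k)) k (fun j hj => hsupp k j hj)]
    rw [sum_inner]
    refine Finset.sum_congr rfl fun j _ => ?_
    rw [lp.inner_single_left]
    simp [RCLike.inner_apply]
    ring
  have hkey2 : ∀ k, (inner ℂ (R (e k)) y : ℂ) = (e n : ∀ _ : ℕ, ℂ) k := by
    intro k
    rw [← adjoint_inner_right, hadjy]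
    exact aux_inner_single (e n) k
  -- diagonal entries are nonzero
  have hdiag_ne : ∀ k, ((R (e k) : ∀ _ : ℕ, ℂ) k) ≠ 0 := by
    intro k h0
    have h1 := aux_inner_single (R (e k)) k
    have h2 := hRdiagRe k
    have : (inner ℂ (e k) (R (e k)) : ℂ) = 0 := by rw [h1]; exact h0
    rw [this] at h2
    simp at h2
  -- y vanishes below n
  have hy0 : ∀ k, k < n → y k = 0 := by
    intro k
    induction k using Nat.strong_induction_on with
    | _ k ih =>
      intro hk
      have h1 := hkey k
      rw [hkey2 k] at h1
      have hen : (e n : ∀ _ : ℕ, ℂ) k = 0 := by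
        simp only [he]
        exact lp.single_apply_ne (E := fun _ : ℕ => ℂ) 2 n (1:ℂ) (Nat.ne_of_lt hk)
      rw [hen] at h1
      rw [Finset.sum_range_succ] at h1
      rw [Finset.sum_eq_zero (fun j hj => by
        rw [ih j (Finset.mem_range.1 hj) (lt_trans (Finset.mem_range.1 hj) hk), mul_zero]),
        zero_add] at h1
      exact (mul_eq_zero.1 h1.symm).resolve_left
        (by simpa using hdiag_ne k)
  -- value of y at n
  have hyn : ((d : ℂ)) * y n = 1 := by
    have h1 := hkey n
    rw [hkey2 n] at h1
    have hen : (e n : ∀ _ : ℕ, ℂ) n = 1 := by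
      simp only [he]
      exact lp.single_apply_self (E := fun _ : ℕ => ℂ) 2 n (1:ℂ)
    rw [hen] at h1
    rw [Finset.sum_range_succ] at h1
    rw [Finset.sum_eq_zero (fun j hj => by
      rw [hy0 j (Finset.mem_range.1 hj), mul_zero]), zero_add] at h1
    have hdd : ((R (e n) : ∀ _ : ℕ, ℂ) n) = (d : ℂ) := by
      have h2 := aux_inner_single (R (e n)) n
      rw [← h2]
      apply Complex.ext
      · simp [hd_def, he]
      · simpa using hRdiagIm n
    rw [hdd, Complex.conj_ofReal] at h1
    exact h1.symm
  -- z and resolvent identities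
  set z : lp (fun _ : ℕ => ℂ) 2 := Rinv y with hz_def
  have hRz : R z = y := by
    have := ContinuousLinearMap.ext_iff.1 hRinv.1 y
    simpa using this
  have hz1 : z = e n + adjoint C (C z) := by
    have h0 := ContinuousLinearMap.ext_iff.1 hM z
    simp only [ContinuousLinearMap.comp_apply, ContinuousLinearMap.sub_apply,
      ContinuousLinearMap.one_apply] at h0
    rw [hRz, hadjy] at h0
    rw [h0]
    abel
  -- commutation: A (T u) = A u - u where A = Rinv ∘ Rinv†, T = C† C
  have hAu : ∀ u, Rinv (adjoint Rinv (adjoint C (C u)))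
      = Rinv (adjoint Rinv u) - u := by
    intro u
    have h0 := ContinuousLinearMap.ext_iff.1 hM u
    simp only [ContinuousLinearMap.comp_apply, ContinuousLinearMap.sub_apply,
      ContinuousLinearMap.one_apply] at h0
    have h1 := congrArg (fun v => Rinv (adjoint Rinv v)) h0
    simp only [map_sub] at h1
    have h2 : adjoint Rinv (adjoint R (R u)) = R u := by
      have := ContinuousLinearMap.ext_iff.1 hadj2 (R u)
      simpa using this
    have h3 : Rinv (R u) = u := by
      have := ContinuousLinearMap.ext_iff.1 hRinv.2 u
      simpa using this
    rw [h2, h3] at h1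
    rw [eq_sub_iff_add_eq] at h1 ⊢
    rw [← h1]
    abel
  -- expansion of ‖y‖²
  have hsum : ‖y‖^2 = 1 + ‖C (e n)‖^2 + ‖adjoint Rinv (adjoint C (C (e n)))‖^2 := by
    have h1 : (inner ℂ y y : ℂ) = inner ℂ (e n) z := by
      rw [hz_def, hy_def]
      exact adjoint_inner_left Rinv (adjoint Rinv (e n)) (e n)
    have hz2 : Rinv (adjoint Rinv (e n)) = z := by rw [hz_def, hy_def]
    have hw : adjoint C (C z) = Rinv (adjoint Rinv (adjoint C (C (e n)))) := by
      rw [hAu (e n), hz2, eq_sub_iff_add_eq, add_comm]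
      exact hz1.symm
    have h2 : (inner ℂ (e n) z : ℂ) = inner ℂ (e n) (e n) + inner ℂ (C (e n)) (C z) := by
      conv_lhs => rw [hz1]
      rw [inner_add_right, adjoint_inner_right]
    have hCz : C z = C (e n) + C (adjoint C (C z)) := by
      conv_lhs => rw [hz1]
      rw [map_add]
    have h3 : (inner ℂ (C (e n)) (C z) : ℂ) = inner ℂ (C (e n)) (C (e n))
        + inner ℂ (adjoint C (C (e n))) (adjoint C (C z)) := by
      conv_lhs => rw [hCz]
      rw [inner_add_right]
      congr 1
      exact (adjoint_inner_left C (adjoint C (C z)) (C (e n))).symm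
    have h4 : (inner ℂ (adjoint C (C (e n))) (adjoint C (C z)) : ℂ)
        = inner ℂ (adjoint Rinv (adjoint C (C (e n)))) (adjoint Rinv (adjoint C (C (e n)))) := by
      rw [hw]
      exact (adjoint_inner_left Rinv (adjoint Rinv (adjoint C (C (e n)))) (adjoint C (C (e n)))).symm
    have hfull : (inner ℂ y y : ℂ) = inner ℂ (e n) (e n) + inner ℂ (C (e n)) (C (e n))
        + inner ℂ (adjoint Rinv (adjoint C (C (e n)))) (adjoint Rinv (adjoint C (C (e n)))) := by
      rw [h1, h2, h3, h4]
      ring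
    rw [inner_self_eq_norm_sq_to_K, inner_self_eq_norm_sq_to_K, inner_self_eq_norm_sq_to_K,
      inner_self_eq_norm_sq_to_K, hnorme n] at hfull
    norm_num at hfull
    exact_mod_cast hfull
  -- norm bounds
  have hCle : ∀ v : lp (fun _ : ℕ => ℂ) 2, ‖C v‖ ≤ ‖C‖ * ‖v‖ := fun v => C.le_opNorm v
  have hRinvb : ∀ u, ‖Rinv u‖^2 * (1 - ‖C‖^2) ≤ ‖u‖^2 := by
    intro u
    have h1 : R (Rinv u) = u := by
      have := ContinuousLinearMap.ext_iff.1 hRinv.1 u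
      simpa using this
    have h2 := hnormx (Rinv u)
    rw [h1] at h2
    have h3 := hCle (Rinv u)
    have h4 : ‖C (Rinv u)‖^2 ≤ (‖C‖ * ‖Rinv u‖)^2 :=
      pow_le_pow_left₀ (norm_nonneg _) h3 2
    rw [mul_pow] at h4
    nlinarith [h2, h4, sq_nonneg ‖Rinv u‖]
  have hadjb : ∀ v, ‖adjoint Rinv v‖^2 * (1 - ‖C‖^2) ≤ ‖v‖^2 := by
    intro v
    have h1 : ‖adjoint Rinv v‖^2 ≤ ‖v‖ * ‖Rinv (adjoint Rinv v)‖ := by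
      have e1 : ((inner ℂ (adjoint Rinv v) (adjoint Rinv v) : ℂ)).re = ‖adjoint Rinv v‖^2 := by
        rw [inner_self_eq_norm_sq_to_K]
        norm_cast
      have e2 : (inner ℂ (adjoint Rinv v) (adjoint Rinv v) : ℂ)
          = inner ℂ v (Rinv (adjoint Rinv v)) :=
        adjoint_inner_left Rinv (adjoint Rinv v) v
      calc ‖adjoint Rinv v‖^2 = (inner ℂ v (Rinv (adjoint Rinv v)) : ℂ).re := by
            rw [← e2, e1]
        _ ≤ ‖(inner ℂ v (Rinv (adjoint Rinv v)) : ℂ)‖ := Complex.re_le_norm _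
        _ = ‖(inner ℂ v (Rinv (adjoint Rinv v)) : ℂ)‖ := rfl
        _ ≤ ‖v‖ * ‖Rinv (adjoint Rinv v)‖ := norm_inner_le_norm _ _
    have h2 := hRinvb (adjoint Rinv v)
    rcases eq_or_lt_of_le (norm_nonneg (adjoint Rinv v)) with h | h
    · rw [← h]
      nlinarith [sq_nonneg ‖v‖]
    · have h14 : (‖adjoint Rinv v‖^2)^2 ≤ (‖v‖ * ‖Rinv (adjoint Rinv v)‖)^2 :=
        pow_le_pow_left₀ (sq_nonneg _) h1 2
      nlinarith [mul_pos h h, norm_nonneg v, norm_nonneg (Rinv (adjoint Rinv v)), sq_nonneg (‖v‖ * ‖Rinv (adjoint Rinv v)‖)]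
  have hadjCnorm : ‖adjoint C‖ = ‖C‖ :=
    LinearIsometryEquiv.norm_map ContinuousLinearMap.adjoint C
  have hTe2 : ‖adjoint C (C (e n))‖^2 ≤ ‖C‖^2 * ‖C (e n)‖^2 := by
    have h1 : ‖adjoint C (C (e n))‖ ≤ ‖C‖ * ‖C (e n)‖ := by
      calc ‖adjoint C (C (e n))‖ ≤ ‖adjoint C‖ * ‖C (e n)‖ := (adjoint C).le_opNorm _
        _ = ‖C‖ * ‖C (e n)‖ := by rw [hadjCnorm]
    have := pow_le_pow_left₀ (norm_nonneg _) h1 2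
    nlinarith [this]
  -- 1/d ≤ ‖y‖
  have hs2 : (1/d)^2 ≤ ‖y‖^2 := by
    have h1 : d * ‖y n‖ = 1 := by
      have h := congrArg norm hyn
      simpa [norm_mul, Complex.norm_real, abs_of_pos hd0] using h
    have h2 : ‖y n‖ ≤ ‖y‖ := by
      have e3 : ((y n : ℂ)) = inner ℂ (e n) y := (aux_inner_single y n).symm
      calc ‖y n‖ = ‖((y n : ℂ))‖ := rfl
        _ = ‖(inner ℂ (e n) y : ℂ)‖ := by rw [e3]
        _ ≤ ‖e n‖ * ‖y‖ := norm_inner_le_norm _ _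
        _ = ‖y‖ := by rw [hnorme n, one_mul]
    have h3 : 1/d ≤ ‖y‖ := by
      rw [div_le_iff₀ hd0, mul_comm]
      nlinarith [h1, h2]
    have : (0:ℝ) ≤ 1/d := by positivity
    nlinarith [h3]
  -- Part 4
  have part4 : 1/d - d ≤ ε n / (1 - ‖C‖^2) := by
    rw [le_div_iff₀ hδpos]
    have hεn : ε n = ‖C (e n)‖^2 := hε n
    have hstep : 1/d - d ≤ (1/d)^2 - 1 := by
      have key : (1/d)^2 - 1 - (1/d - d) = (1-d)^2 * (1+d) / d^2 := by
        field_simp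
        ring
      have hpos : (0:ℝ) ≤ (1-d)^2 * (1+d) / d^2 := by positivity
      linarith [key, hpos]
    have hK := hadjb (adjoint C (C (e n)))
    have hq2 : (1/d)^2 ≤ 1 + ε n + ‖adjoint Rinv (adjoint C (C (e n)))‖^2 := by
      rw [hεn]
      calc (1/d)^2 ≤ ‖y‖^2 := hs2
        _ = 1 + ‖C (e n)‖^2 + ‖adjoint Rinv (adjoint C (C (e n)))‖^2 := hsum
    have hK2 : ‖adjoint Rinv (adjoint C (C (e n)))‖^2 * (1 - ‖C‖^2)
        ≤ ‖C‖^2 * ε n := by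
      rw [hεn]
      linarith [hK, hTe2]
    have g1 : (1/d - d) * (1 - ‖C‖^2) ≤ ((1/d)^2 - 1) * (1 - ‖C‖^2) :=
      mul_le_mul_of_nonneg_right hstep hδpos.le
    have g2 : ((1/d)^2 - 1) * (1 - ‖C‖^2)
        ≤ (ε n + ‖adjoint Rinv (adjoint C (C (e n)))‖^2) * (1 - ‖C‖^2) :=
      mul_le_mul_of_nonneg_right (by linarith) hδpos.le
    have g3 : (ε n + ‖adjoint Rinv (adjoint C (C (e n)))‖^2) * (1 - ‖C‖^2)
        = ε n * (1 - ‖C‖^2) + ‖adjoint Rinv (adjoint C (C (e n)))‖^2 * (1 - ‖C‖^2) := by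
      ring
    have g4 : ε n * (1 - ‖C‖^2) + ‖C‖^2 * ε n = ε n := by ring
    linarith [g1, g2, g3, g4, hK2]
  exact ⟨part1, part2, part3, part4⟩
end

section
/- For every n ≥ 0 and every w with |w| > 1: | √(π/(n+1)) · ψ'(w) · f_n(ψ(w)) / wⁿ − 1 | ≤ √(ε_n/(n+1)) / ((|w|² − 1) · |w|ⁿ). In particular, √(π/(n+1)) · ψ'(w) f_n(ψ(w)) / wⁿ → 1 uniformly and geometrically fast on {|w| ≥ ρ} for each ρ > 1. -/
open Filter Real

lemma myCS {f g : ℕ → ℝ} (hf : ∀ i, 0 ≤ f i) (hg : ∀ i, 0 ≤ g i)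
    (hf2 : Summable (fun i => f i ^ 2)) (hg2 : Summable (fun i => g i ^ 2))
    (hfg : Summable (fun i => f i * g i)) :
    ∑' i, f i * g i ≤ Real.sqrt (∑' i, f i ^ 2) * Real.sqrt (∑' i, g i ^ 2) := by
  apply Summable.tsum_le_of_sum_le hfg
  intro s
  calc ∑ i ∈ s, f i * g i
      ≤ Real.sqrt ((∑ i ∈ s, f i ^ 2) * (∑ i ∈ s, g i ^ 2)) := by
        rw [← Real.sqrt_sq (Finset.sum_nonneg fun i _ => mul_nonneg (hf i) (hg i))]
        exact Real.sqrt_le_sqrt (Finset.sum_mul_sq_le_sq_mul_sq s f g)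
    _ ≤ _ := by
        rw [Real.sqrt_mul (Finset.sum_nonneg fun i _ => sq_nonneg _)]
        gcongr
        · exact Summable.sum_le_tsum s (fun i _ => sq_nonneg _) hf2
        · exact Summable.sum_le_tsum s (fun i _ => sq_nonneg _) hg2

lemma mygeom_summable {x : ℝ} (h0 : 0 ≤ x) (h1 : x < 1) :
    Summable (fun ℓ : ℕ => ((ℓ:ℝ)+1) * x ^ ℓ) := by
  have hx : ‖x‖ < 1 := by rwa [Real.norm_eq_abs, abs_of_nonneg h0]
  have h1' : Summable (fun ℓ : ℕ => (ℓ:ℝ) * x ^ ℓ) := by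
    simpa using summable_pow_mul_geometric_of_norm_lt_one 1 hx
  have h2' : Summable (fun ℓ : ℕ => x ^ ℓ) := summable_geometric_of_lt_one h0 h1
  have := h1'.add h2'
  convert this using 2 with ℓ
  ring

lemma mygeom {x : ℝ} (h0 : 0 ≤ x) (h1 : x < 1) :
    ∑' ℓ : ℕ, ((ℓ:ℝ)+1) * x ^ ℓ = ((1-x)⁻¹) ^ 2 := by
  have hx : ‖x‖ < 1 := by rwa [Real.norm_eq_abs, abs_of_nonneg h0]
  have h1' : Summable (fun ℓ : ℕ => (ℓ:ℝ) * x ^ ℓ) := by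
    simpa using summable_pow_mul_geometric_of_norm_lt_one 1 hx
  have h2' : Summable (fun ℓ : ℕ => x ^ ℓ) := summable_geometric_of_lt_one h0 h1
  have : ∑' ℓ : ℕ, ((ℓ:ℝ)+1) * x ^ ℓ = (∑' ℓ : ℕ, (ℓ:ℝ) * x ^ ℓ) + ∑' ℓ : ℕ, x ^ ℓ := by
    rw [← Summable.tsum_add h1' h2']
    congr 1; ext ℓ; ring
  rw [this, tsum_coe_mul_geometric_of_norm_lt_one hx, tsum_geometric_of_lt_one h0 h1]
  have : (1:ℝ) - x ≠ 0 := by nlinarith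
  field_simp
  ring

/-- Estimate (1.15)–(1.16): for `|w| > 1`,
`|√(π/(n+1)) ψ'(w) f_n(ψ(w))/wⁿ − 1| ≤ √(ε_n/(n+1)) / ((|w|²−1)|w|ⁿ)`; in particular the
left-hand side tends to `0` uniformly and geometrically fast on each set `{|w| ≥ ρ}`, `ρ > 1`. -/
theorem faber_exterior_asymptotics
    (γ : ℝ) (hγ : 0 < γ) (ψ : ℂ → ℂ)
    (hψdiff : DifferentiableOn ℂ ψ {w : ℂ | 1 < ‖w‖})
    (hψinj : Set.InjOn ψ {w : ℂ | 1 < ‖w‖})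
    (hψinf : Tendsto (fun w => ψ w / w) (comap (fun w : ℂ => ‖w‖) atTop) (nhds ((1:ℂ)/γ)))
    (F : ℕ → Polynomial ℂ)
    (hFdeg : ∀ n : ℕ, (F (n+1)).degree = (n+1 : ℕ))
    (hFlead : ∀ n : ℕ, (F (n+1)).leadingCoeff = (γ : ℂ)^(n+1))
    (f : ℕ → ℂ → ℂ)
    (hf : ∀ n z, f n z = (F (n+1)).derivative.eval z / ((Real.sqrt (π * (n+1)) : ℝ) : ℂ))
    (C : ℕ → ℕ → ℂ)
    (ε : ℕ → ℝ) (hε : ∀ n, ε n = ∑' ℓ, ‖C ℓ n‖^2)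
    (hCsum : ∀ n, Summable (fun ℓ => ‖C ℓ n‖^2))
    (hεle : ∀ n, ε n ≤ 1)
    (hresidsum : ∀ n : ℕ, ∀ w : ℂ, 1 < ‖w‖ →
      Summable (fun ℓ : ℕ =>
        ‖((Real.sqrt ((ℓ+1)/π) : ℝ) : ℂ) * w^(-(ℓ:ℤ)-2) * C ℓ n‖))
    (hresid : ∀ n : ℕ, ∀ w : ℂ, 1 < ‖w‖ →
      deriv ψ w * f n (ψ w) - ((Real.sqrt ((n+1)/π) : ℝ) : ℂ) * w^n
        = - ∑' ℓ : ℕ, ((Real.sqrt ((ℓ+1)/π) : ℝ) : ℂ) * w^(-(ℓ:ℤ)-2) * C ℓ n) :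
    (∀ n : ℕ, ∀ w : ℂ, 1 < ‖w‖ →
      ‖((Real.sqrt (π/(n+1)) : ℝ) : ℂ) * deriv ψ w * f n (ψ w) / w^n - 1‖
        ≤ Real.sqrt (ε n / (n+1)) / ((‖w‖^2 - 1) * ‖w‖^n)) ∧
    (∀ ρ : ℝ, 1 < ρ → ∃ c : ℝ, 0 < c ∧ ∃ q : ℝ, 0 ≤ q ∧ q < 1 ∧
      ∀ n : ℕ, ∀ w : ℂ, ρ ≤ ‖w‖ →
        ‖((Real.sqrt (π/(n+1)) : ℝ) : ℂ) * deriv ψ w * f n (ψ w) / w^n - 1‖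
          ≤ c * q^n) := by
  have hπ : (0:ℝ) < π := Real.pi_pos
  have hεnn : ∀ n, 0 ≤ ε n := by
    intro n; rw [hε n]; exact tsum_nonneg fun ℓ => sq_nonneg _
  have main : ∀ n : ℕ, ∀ w : ℂ, 1 < ‖w‖ →
      ‖((Real.sqrt (π/(n+1)) : ℝ) : ℂ) * deriv ψ w * f n (ψ w) / w^n - 1‖
        ≤ Real.sqrt (ε n / (n+1)) / ((‖w‖^2 - 1) * ‖w‖^n) := by
    intro n w hw
    have hw0 : w ≠ 0 := by
      intro h; rw [h] at hw; simp at hw; linarith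
    set r : ℝ := ‖w‖ with hrdef
    have hr : 1 < r := hw
    have hr0 : 0 < r := lt_trans one_pos hr
    have hwn : w ^ n ≠ 0 := pow_ne_zero _ hw0
    have hn1 : (0:ℝ) < (n:ℝ) + 1 := by positivity
    set A : ℝ := Real.sqrt (π/(n+1)) with hAdef
    set B : ℝ := Real.sqrt ((n+1)/π) with hBdef
    have hA0 : 0 ≤ A := Real.sqrt_nonneg _
    have hAB : A * B = 1 := by
      rw [hAdef, hBdef, ← Real.sqrt_mul (by positivity)]
      rw [show (π/(n+1)) * ((n+1)/π) = 1 by field_simp]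
      exact Real.sqrt_one
    set S : ℂ := ∑' ℓ : ℕ, ((Real.sqrt ((ℓ+1)/π) : ℝ) : ℂ) * w^(-(ℓ:ℤ)-2) * C ℓ n with hSdef
    have h := hresid n w hw
    rw [← hSdef] at h
    have hABC : ((A:ℝ):ℂ) * ((B:ℝ):ℂ) = 1 := by
      rw [← Complex.ofReal_mul, hAB, Complex.ofReal_one]
    have key : ((A:ℝ):ℂ) * deriv ψ w * f n (ψ w) / w^n - 1
        = ((A:ℝ):ℂ) * (-S) / w^n := by
      field_simp
      linear_combination ((A:ℝ):ℂ) * h + (w^n) * hABC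
    rw [key]
    rw [norm_div, norm_mul, norm_neg, Complex.norm_of_nonneg hA0,
      norm_pow]
    -- now : A * ‖S‖ / r ^ n ≤ ...
    set a : ℕ → ℝ := fun ℓ => Real.sqrt ((ℓ:ℝ)+1) * (r ^ (ℓ+2))⁻¹ with hadef
    set b : ℕ → ℝ := fun ℓ => ‖C ℓ n‖ with hbdef
    have ha0 : ∀ ℓ, 0 ≤ a ℓ := fun ℓ => by positivity
    have hb0 : ∀ ℓ, 0 ≤ b ℓ := fun ℓ => norm_nonneg _
    have hπs : Real.sqrt π ≠ 0 := by positivity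
    have habs : ∀ ℓ : ℕ, ‖((Real.sqrt ((ℓ+1)/π) : ℝ) : ℂ) * w^(-(ℓ:ℤ)-2) * C ℓ n‖
        = (Real.sqrt π)⁻¹ * (a ℓ * b ℓ) := by
      intro ℓ
      rw [norm_mul, norm_mul, Complex.norm_real, Real.norm_eq_abs, norm_zpow,
        show (-(ℓ:ℤ)-2) = -((ℓ+2 : ℕ):ℤ) by push_cast; ring, zpow_neg, zpow_natCast,
        abs_of_nonneg (Real.sqrt_nonneg _),
        Real.sqrt_div (by positivity : (0:ℝ) ≤ (ℓ:ℝ)+1)]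
      rw [hadef, hbdef]
      simp only []
      rw [← hrdef]
      ring
    -- summabilities
    have hab : Summable (fun ℓ => a ℓ * b ℓ) := by
      have h1 := (hresidsum n w hw).mul_left (Real.sqrt π)
      refine h1.congr fun ℓ => ?_
      rw [habs ℓ]
      field_simp
    set x : ℝ := (r^2)⁻¹ with hxdef
    have hx0 : 0 ≤ x := by positivity
    have hx1 : x < 1 := by
      rw [hxdef, inv_lt_one_iff₀]; right; nlinarith
    have ha2eq : ∀ ℓ : ℕ, a ℓ ^ 2 = x^2 * (((ℓ:ℝ)+1) * x ^ ℓ) := by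
      intro ℓ
      have h2 : ((r ^ (ℓ+2))⁻¹)^2 = x ^ (ℓ+2) := by
        rw [hxdef, inv_pow, inv_pow, ← pow_mul, ← pow_mul, Nat.mul_comm]
      rw [hadef]
      simp only []
      rw [mul_pow, Real.sq_sqrt (by positivity : (0:ℝ) ≤ (ℓ:ℝ)+1), h2, pow_add]
      ring
    have ha2 : Summable (fun ℓ => a ℓ ^ 2) := by
      have := (mygeom_summable hx0 hx1).mul_left (x^2)
      exact this.congr fun ℓ => (ha2eq ℓ).symm
    have hb2 : Summable (fun ℓ => b ℓ ^ 2) := hCsum n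
    have hr21 : (0:ℝ) < r^2 - 1 := by nlinarith
    have hsa : Real.sqrt (∑' ℓ, a ℓ ^ 2) = (r^2 - 1)⁻¹ := by
      have : ∑' ℓ, a ℓ ^ 2 = x^2 * ((1-x)⁻¹)^2 := by
        rw [tsum_congr ha2eq, tsum_mul_left, mygeom hx0 hx1]
      have h1x : 0 < 1 - x := by linarith
      rw [this, ← mul_pow, Real.sqrt_sq (mul_nonneg hx0 (le_of_lt (inv_pos.2 h1x)))]
      rw [hxdef]
      rw [show (1 - (r^2)⁻¹) = (r^2-1)/r^2 by field_simp]
      field_simp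
    have hsb : Real.sqrt (∑' ℓ, b ℓ ^ 2) = Real.sqrt (ε n) := by
      rw [hε n]
    -- abs S bound
    have hS1 : ‖S‖ ≤ ∑' ℓ : ℕ,
        ‖((Real.sqrt ((ℓ+1)/π) : ℝ) : ℂ) * w^(-(ℓ:ℤ)-2) * C ℓ n‖ := by
      have := norm_tsum_le_tsum_norm (f := fun ℓ : ℕ =>
        ((Real.sqrt ((ℓ+1)/π) : ℝ) : ℂ) * w^(-(ℓ:ℤ)-2) * C ℓ n) ?_
      · simpa [hSdef] using this
      · simpa using hresidsum n w hw
    have hS2 : (∑' ℓ : ℕ,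
        ‖((Real.sqrt ((ℓ+1)/π) : ℝ) : ℂ) * w^(-(ℓ:ℤ)-2) * C ℓ n‖)
        = (Real.sqrt π)⁻¹ * ∑' ℓ, a ℓ * b ℓ := by
      rw [tsum_congr habs, tsum_mul_left]
    have hCS : ∑' ℓ, a ℓ * b ℓ ≤ (r^2-1)⁻¹ * Real.sqrt (ε n) := by
      have := myCS ha0 hb0 ha2 hb2 hab
      rwa [hsa, hsb] at this
    have hrn : (0:ℝ) < r ^ n := by positivity
    calc A * ‖S‖ / r ^ n
        ≤ A * ((Real.sqrt π)⁻¹ * ((r^2-1)⁻¹ * Real.sqrt (ε n))) / r ^ n := by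
          gcongr
          calc ‖S‖ ≤ _ := hS1
            _ = (Real.sqrt π)⁻¹ * ∑' ℓ, a ℓ * b ℓ := hS2
            _ ≤ _ := mul_le_mul_of_nonneg_left hCS (by positivity)
      _ = Real.sqrt (ε n / (n+1)) / ((r^2 - 1) * r^n) := by
          rw [hAdef, Real.sqrt_div (le_of_lt hπ), Real.sqrt_div (hεnn n)]
          have hn1s : Real.sqrt ((n:ℝ)+1) ≠ 0 := by positivity
          field_simp
  constructor
  · exact main
  · intro ρ hρ
    have hρ0 : 0 < ρ := lt_trans one_pos hρ
    have hρ2 : 0 < ρ^2 - 1 := by nlinarith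
    refine ⟨(ρ^2-1)⁻¹, inv_pos.2 hρ2, ρ⁻¹, le_of_lt (inv_pos.2 hρ0),
      inv_lt_one_of_one_lt₀ hρ, ?_⟩
    intro n w hwρ
    have hw1 : 1 < ‖w‖ := lt_of_lt_of_le hρ hwρ
    refine (main n w hw1).trans ?_
    have hεd : ε n / ((n:ℝ)+1) ≤ 1 := by
      rw [div_le_one (by positivity)]
      have h1 := hεnn n; have h2 := hεle n
      have h3 : (0:ℝ) ≤ (n:ℝ) := Nat.cast_nonneg n
      linarith
    have hnum : Real.sqrt (ε n / (n+1)) ≤ 1 := Real.sqrt_le_one.mpr hεd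
    have hd2 : 0 < (ρ^2-1) * ρ^n := by positivity
    have hd1 : (ρ^2-1) * ρ^n ≤ (‖w‖^2 - 1) * ‖w‖^n := by
      have h1 : ρ^2 ≤ ‖w‖^2 := by
        have := hρ0.le
        gcongr
      have h2 : ρ^n ≤ ‖w‖^n := by
        have := hρ0.le
        gcongr
      have h3 : 0 ≤ ρ^2-1 := hρ2.le
      nlinarith [pow_pos hρ0 n]
    calc Real.sqrt (ε n / (n+1)) / ((‖w‖^2 - 1) * ‖w‖^n)
        ≤ 1 / ((ρ^2-1) * ρ^n) := div_le_div₀ zero_le_one hnum hd2 hd1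
      _ = (ρ^2-1)⁻¹ * (ρ⁻¹)^n := by
          rw [one_div, mul_inv, inv_pow]
end

section
/- For every n ≥ 0 the polynomial identity z · F'_{n+1}(z)/(n+1) = ∑_{j=0}^{n+1} ψ_{j−n} · F'_{j+1}(z)/(j+1) holds for all z ∈ ℂ; equivalently, with f_n := F'_{n+1}/√(π(n+1)), one has z · f_n(z) = ∑_{j=0}^{n+1} √((n+1)/(j+1)) · ψ_{j−n} · f_j(z). -/
open Filter

noncomputable def Complex.abs : AbsoluteValue ℂ ℝ where
  toFun z := ‖z‖
  map_mul' := norm_mul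
  nonneg' := norm_nonneg
  eq_zero' _ := norm_eq_zero
  add_le' := norm_add_le

lemma Complex.norm_eq_abs (z : ℂ) : ‖z‖ = Complex.abs z := rfl

lemma Complex.abs_two : Complex.abs 2 = 2 := by
  show ‖(2:ℂ)‖ = 2
  simp

lemma Complex.continuous_abs : Continuous Complex.abs := continuous_norm

lemma LeqCobounded : comap Complex.abs atTop = Bornology.cobounded ℂ := by
  have : Complex.abs = fun z : ℂ => ‖z‖ := by funext z; simp [Complex.norm_eq_abs]
  rw [this]; exact comap_norm_atTop

instance : (comap Complex.abs atTop).NeBot := by rw [LeqCobounded]; infer_instance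

lemma ev_iff {p : ℂ → Prop} :
    (∀ᶠ w in comap Complex.abs atTop, p w) ↔ ∃ R : ℝ, ∀ w : ℂ, R ≤ Complex.abs w → p w := by
  rw [Filter.eventually_comap, Filter.eventually_atTop]
  constructor
  · rintro ⟨R, h⟩; exact ⟨R, fun w hw => h _ hw w rfl⟩
  · rintro ⟨R, h⟩; exact ⟨R, fun b hb w hw => h w (hw ▸ hb)⟩

lemma absTendsto : Tendsto (fun w : ℂ => Complex.abs w) (comap Complex.abs atTop) atTop :=
  tendsto_comap

lemma invAbsTendsto : Tendsto (fun w : ℂ => (Complex.abs w)⁻¹) (comap Complex.abs atTop) (nhds 0) :=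
  absTendsto.inv_tendsto_atTop

lemma invTendsto : Tendsto (fun w : ℂ => w⁻¹) (comap Complex.abs atTop) (nhds 0) := by
  rw [tendsto_zero_iff_norm_tendsto_zero]
  simpa [Complex.norm_eq_abs] using invAbsTendsto


lemma keyDeriv {g : ℂ → ℂ} (hg : DifferentiableOn ℂ g {w : ℂ | 1 < Complex.abs w})
    (h0 : Tendsto g (comap Complex.abs atTop) (nhds 0)) :
    Tendsto (fun w : ℂ => w * deriv g w) (comap Complex.abs atTop) (nhds 0) := by
  rw [NormedAddCommGroup.tendsto_nhds_zero]
  intro ε hε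
  have h7 : 0 < ε / 7 := by positivity
  obtain ⟨R, hR⟩ := ev_iff.1 ((NormedAddCommGroup.tendsto_nhds_zero.1 h0) (ε/7) h7)
  refine ev_iff.2 ⟨max (2*R) 4, fun w hw => ?_⟩
  have h4 : (4:ℝ) ≤ Complex.abs w := le_trans (le_max_right _ _) hw
  have h2R : 2*R ≤ Complex.abs w := le_trans (le_max_left _ _) hw
  set r := Complex.abs w / 2 with hrdef
  have hr : 0 < r := by rw [hrdef]; linarith
  have hRr : R ≤ r := by rw [hrdef]; linarith
  have hball : ∀ ζ ∈ Metric.ball w r, r ≤ Complex.abs ζ := by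
    intro ζ hζ
    rw [Metric.mem_ball, Complex.dist_eq] at hζ
    have : Complex.abs w - Complex.abs ζ ≤ Complex.abs (ζ - w) := by
      have h := Complex.abs.abs_abv_sub_le_abv_sub w ζ
      have h2 : Complex.abs w - Complex.abs ζ ≤ |Complex.abs w - Complex.abs ζ| := le_abs_self _
      rw [Complex.abs.map_sub] at h
      linarith
    rw [Complex.norm_eq_abs] at hζ
    rw [hrdef] at *; linarith
  have hsub : Metric.ball w r ⊆ {w : ℂ | 1 < Complex.abs w} := by
    intro ζ hζ
    have := hball ζ hζ
    simp only [Set.mem_setOf_eq]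
    rw [hrdef] at this; linarith
  have hd : DifferentiableOn ℂ g (Metric.ball w r) := hg.mono hsub
  have hmaps : Set.MapsTo g (Metric.ball w r) (Metric.ball (g w) (3*(ε/7))) := by
    intro ζ hζ
    have h1 : ‖g ζ‖ < ε/7 := hR ζ (le_trans hRr (hball ζ hζ))
    have h2 : ‖g w‖ < ε/7 := hR w (by linarith)
    rw [Metric.mem_ball, dist_eq_norm]
    calc ‖g ζ - g w‖ ≤ ‖g ζ‖ + ‖g w‖ := norm_sub_le _ _
      _ < 3*(ε/7) := by linarith
  have hest := Complex.norm_deriv_le_div_of_mapsTo_ball hd (hmaps.mono_right Metric.ball_subset_closedBall) hr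
  have habs : ‖w * deriv g w‖ = Complex.abs w * ‖deriv g w‖ := by
    simp [Complex.norm_eq_abs, map_mul]
  rw [habs]
  have hw0 : (0:ℝ) < Complex.abs w := by linarith
  calc Complex.abs w * ‖deriv g w‖ ≤ Complex.abs w * (3*(ε/7)/r) := by
        exact mul_le_mul_of_nonneg_left hest (le_of_lt hw0)
    _ = 6*(ε/7) := by rw [hrdef]; field_simp; ring
    _ < ε := by linarith


lemma zpow_eq_inv_pow (x : ℂ) (k : ℕ) : x ^ (-(k:ℤ)-1) = (x^(k+1))⁻¹ := by
  have h : (-(k:ℤ)-1) = -((k+1 : ℕ) : ℤ) := by push_cast; ring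
  rw [h, zpow_neg, zpow_natCast]

lemma termBound {b : ℕ → ℂ} {w : ℂ} (hw : 2 ≤ Complex.abs w) (k : ℕ) :
    ‖b k * w^(-(k:ℤ)-1)‖ ≤ (Complex.abs (b k) * ((2:ℝ)^(k+1))⁻¹) * (2 / Complex.abs w) := by
  have hw0 : (0:ℝ) < Complex.abs w := by linarith
  rw [Complex.norm_eq_abs, map_mul, zpow_eq_inv_pow, map_inv₀, map_pow]
  rw [mul_assoc]
  apply mul_le_mul_of_nonneg_left _ (Complex.abs.nonneg _)
  calc ((Complex.abs w)^(k+1))⁻¹ = ((Complex.abs w)^k)⁻¹ * (Complex.abs w)⁻¹ := by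
        rw [pow_succ, mul_inv]
    _ ≤ ((2:ℝ)^k)⁻¹ * (Complex.abs w)⁻¹ := by
        have : (2:ℝ)^k ≤ (Complex.abs w)^k := pow_le_pow_left₀ (by norm_num) hw k
        have h2 : (0:ℝ) < (2:ℝ)^k := by positivity
        have := inv_anti₀ h2 this
        apply mul_le_mul_of_nonneg_right this (by positivity)
    _ = ((2:ℝ)^(k+1))⁻¹ * (2 / Complex.abs w) := by
        rw [pow_succ, mul_inv]
        field_simp

lemma tailSummable {b : ℕ → ℂ} (hb : Summable (fun k => Complex.abs (b k) * ((2:ℝ)^(k+1))⁻¹))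
    {w : ℂ} (hw : 2 ≤ Complex.abs w) : Summable (fun k : ℕ => b k * w^(-(k:ℤ)-1)) := by
  apply Summable.of_norm
  apply Summable.of_nonneg_of_le (fun k => norm_nonneg _) (fun k => termBound hw k)
  exact hb.mul_right _

lemma tailNormBound {b : ℕ → ℂ} (hb : Summable (fun k => Complex.abs (b k) * ((2:ℝ)^(k+1))⁻¹))
    {w : ℂ} (hw : 2 ≤ Complex.abs w) :
    ‖∑' k : ℕ, b k * w^(-(k:ℤ)-1)‖ ≤
      (∑' k : ℕ, Complex.abs (b k) * ((2:ℝ)^(k+1))⁻¹) * (2 / Complex.abs w) := by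
  calc ‖∑' k : ℕ, b k * w^(-(k:ℤ)-1)‖ ≤ ∑' k : ℕ, ‖b k * w^(-(k:ℤ)-1)‖ := by
        apply norm_tsum_le_tsum_norm
        apply Summable.of_nonneg_of_le (fun k => norm_nonneg _) (fun k => termBound hw k)
        exact hb.mul_right _
    _ ≤ ∑' k : ℕ, (Complex.abs (b k) * ((2:ℝ)^(k+1))⁻¹) * (2 / Complex.abs w) := by
        apply Summable.tsum_le_tsum (fun k => termBound hw k)
        · apply Summable.of_nonneg_of_le (fun k => norm_nonneg _) (fun k => termBound hw k)
          exact hb.mul_right _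
        · exact hb.mul_right _
    _ = (∑' k : ℕ, Complex.abs (b k) * ((2:ℝ)^(k+1))⁻¹) * (2 / Complex.abs w) :=
        tsum_mul_right

lemma tailTendsto {b : ℕ → ℂ}
    (hb : Summable (fun k => Complex.abs (b k) * ((2:ℝ)^(k+1))⁻¹)) :
    Tendsto (fun w : ℂ => ∑' k : ℕ, b k * w^(-(k:ℤ)-1)) (comap Complex.abs atTop) (nhds 0) := by
  apply squeeze_zero_norm' (f := fun w : ℂ => ∑' k : ℕ, b k * w^(-(k:ℤ)-1))
    (a := fun w : ℂ => ((∑' k : ℕ, Complex.abs (b k) * ((2:ℝ)^(k+1))⁻¹) * 2) * (Complex.abs w)⁻¹)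
  · refine ev_iff.2 ⟨2, fun w hw => ?_⟩
    have h := tailNormBound hb hw
    rw [div_eq_mul_inv] at h
    calc ‖∑' k : ℕ, b k * w^(-(k:ℤ)-1)‖ ≤ _ := h
      _ = _ := by ring
  · have h1 : Tendsto (fun w : ℂ => (Complex.abs w)⁻¹) (comap Complex.abs atTop) (nhds 0) :=
      (tendsto_comap (f := Complex.abs)).inv_tendsto_atTop
    simpa using h1.const_mul ((∑' k : ℕ, Complex.abs (b k) * ((2:ℝ)^(k+1))⁻¹) * 2)


section Psi
variable {ψ : ℂ → ℂ} {ψcoef : ℤ → ℂ}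

lemma coefSummable
    (hlaurSum : ∀ w : ℂ, 1 < Complex.abs w →
      Summable (fun k : ℕ => Complex.abs (ψcoef (-(k:ℤ)-1) * w^(-(k:ℤ)-1)))) :
    Summable (fun k : ℕ => Complex.abs (ψcoef (-(k:ℤ)-1)) * ((2:ℝ)^(k+1))⁻¹) := by
  have h2 : (1:ℝ) < Complex.abs (2:ℂ) := by simp [Complex.abs_two]
  have := hlaurSum 2 h2
  apply this.congr
  intro k
  rw [map_mul, zpow_eq_inv_pow, map_inv₀, map_pow, Complex.abs_two]

lemma shiftSummable (n : ℕ)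
    (S : Summable (fun k : ℕ => Complex.abs (ψcoef (-(k:ℤ)-1)) * ((2:ℝ)^(k+1))⁻¹)) :
    Summable (fun i : ℕ => Complex.abs (ψcoef (-(i:ℤ)-(n:ℤ)-1)) * ((2:ℝ)^(i+1))⁻¹) := by
  have h1 := ((summable_nat_add_iff n).2 S).mul_right ((2:ℝ)^n)
  apply h1.congr
  intro i
  have hcast : (-((i+n : ℕ):ℤ)-1) = -(i:ℤ)-(n:ℤ)-1 := by push_cast; ring
  rw [hcast]
  rw [mul_assoc]
  congr 1
  rw [show i+n+1 = (i+1)+n from by ring, pow_add, mul_inv]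
  field_simp

lemma psiGrowth
    (hlaur : ∀ w : ℂ, 1 < Complex.abs w →
      ψ w = ψcoef 1 * w + ψcoef 0 + ∑' k : ℕ, ψcoef (-(k:ℤ)-1) * w^(-(k:ℤ)-1))
    (S : Summable (fun k : ℕ => Complex.abs (ψcoef (-(k:ℤ)-1)) * ((2:ℝ)^(k+1))⁻¹))
    (hψ1 : ψcoef 1 ≠ 0) :
    Tendsto (fun w : ℂ => Complex.abs (ψ w)) (comap Complex.abs atTop) atTop := by
  set C := ∑' k : ℕ, Complex.abs (ψcoef (-(k:ℤ)-1)) * ((2:ℝ)^(k+1))⁻¹ with hC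
  have hC0 : 0 ≤ C := tsum_nonneg (fun k => by positivity)
  have href : Tendsto (fun w : ℂ => Complex.abs (ψcoef 1) * Complex.abs w +
      (-(Complex.abs (ψcoef 0) + C))) (comap Complex.abs atTop) atTop := by
    apply tendsto_atTop_add_const_right
    exact (tendsto_comap (f := Complex.abs)).const_mul_atTop
      (Complex.abs.pos hψ1)
  apply tendsto_atTop_mono' _ _ href
  refine ev_iff.2 ⟨2, fun w hw => ?_⟩
  have hw1 : 1 < Complex.abs w := by linarith
  have hw0 : (0:ℝ) < Complex.abs w := by linarith
  simp only
  rw [hlaur w hw1]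
  have htail : Complex.abs (∑' k : ℕ, ψcoef (-(k:ℤ)-1) * w^(-(k:ℤ)-1)) ≤ C := by
    have h1 := tailNormBound S hw
    have h2 : 2 / Complex.abs w ≤ 1 := by rw [div_le_one hw0]; linarith
    calc Complex.abs (∑' k : ℕ, ψcoef (-(k:ℤ)-1) * w^(-(k:ℤ)-1))
        = ‖∑' k : ℕ, ψcoef (-(k:ℤ)-1) * w^(-(k:ℤ)-1)‖ := by rw [Complex.norm_eq_abs]
      _ ≤ C * (2 / Complex.abs w) := h1
      _ ≤ C * 1 := by exact mul_le_mul_of_nonneg_left h2 hC0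
      _ = C := mul_one C
  have h3 : Complex.abs (ψcoef 1 * w) - Complex.abs (ψcoef 0 + ∑' k : ℕ,
      ψcoef (-(k:ℤ)-1) * w^(-(k:ℤ)-1)) ≤
      Complex.abs (ψcoef 1 * w + (ψcoef 0 + ∑' k : ℕ, ψcoef (-(k:ℤ)-1) * w^(-(k:ℤ)-1))) := by
    have h := Complex.abs.abs_abv_sub_le_abv_sub (ψcoef 1 * w)
      (-(ψcoef 0 + ∑' k : ℕ, ψcoef (-(k:ℤ)-1) * w^(-(k:ℤ)-1)))
    rw [sub_neg_eq_add, map_neg_eq_map] at h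
    have h4 := le_abs_self (Complex.abs (ψcoef 1 * w) - Complex.abs (ψcoef 0 + ∑' k : ℕ,
      ψcoef (-(k:ℤ)-1) * w^(-(k:ℤ)-1)))
    linarith
  have h5 : Complex.abs (ψcoef 0 + ∑' k : ℕ, ψcoef (-(k:ℤ)-1) * w^(-(k:ℤ)-1)) ≤
      Complex.abs (ψcoef 0) + C := le_trans (Complex.abs.add_le _ _) (by linarith)
  have h6 : Complex.abs (ψcoef 1 * w) = Complex.abs (ψcoef 1) * Complex.abs w := map_mul _ _ _
  have h7 : ψcoef 1 * w + ψcoef 0 + (∑' k : ℕ, ψcoef (-(k:ℤ)-1) * w^(-(k:ℤ)-1)) =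
      ψcoef 1 * w + (ψcoef 0 + ∑' k : ℕ, ψcoef (-(k:ℤ)-1) * w^(-(k:ℤ)-1)) := by ring
  rw [h7]
  linarith


lemma isOpenOmega : IsOpen {w : ℂ | 1 < Complex.abs w} :=
  isOpen_lt continuous_const Complex.continuous_abs

lemma psiDivW
    (hlaur : ∀ w : ℂ, 1 < Complex.abs w →
      ψ w = ψcoef 1 * w + ψcoef 0 + ∑' k : ℕ, ψcoef (-(k:ℤ)-1) * w^(-(k:ℤ)-1))
    (S : Summable (fun k : ℕ => Complex.abs (ψcoef (-(k:ℤ)-1)) * ((2:ℝ)^(k+1))⁻¹)) :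
    Tendsto (fun w : ℂ => ψ w * w⁻¹) (comap Complex.abs atTop) (nhds (ψcoef 1)) := by
  have hlim : Tendsto (fun w : ℂ => ψcoef 1 + (ψcoef 0 * w⁻¹ +
      (∑' k : ℕ, ψcoef (-(k:ℤ)-1) * w^(-(k:ℤ)-1)) * w⁻¹)) (comap Complex.abs atTop)
      (nhds (ψcoef 1)) := by
    have h1 := (invTendsto.const_mul (ψcoef 0)).add ((tailTendsto S).mul invTendsto)
    have h2 := (tendsto_const_nhds (x := ψcoef 1) (f := comap Complex.abs atTop)).add h1
    simpa using h2
  apply hlim.congr'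
  refine ev_iff.2 ⟨2, fun w hw => ?_⟩
  have hw1 : 1 < Complex.abs w := by linarith
  have hw0 : w ≠ 0 := by
    intro h; rw [h, map_zero] at hw1; norm_num at hw1
  simp only
  rw [hlaur w hw1]
  rw [add_mul, add_mul, mul_assoc, mul_inv_cancel₀ hw0, mul_one]
  ring

lemma psiDerivLim
    (hψdiff : DifferentiableOn ℂ ψ {w : ℂ | 1 < Complex.abs w})
    (hlaur : ∀ w : ℂ, 1 < Complex.abs w →
      ψ w = ψcoef 1 * w + ψcoef 0 + ∑' k : ℕ, ψcoef (-(k:ℤ)-1) * w^(-(k:ℤ)-1))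
    (S : Summable (fun k : ℕ => Complex.abs (ψcoef (-(k:ℤ)-1)) * ((2:ℝ)^(k+1))⁻¹)) :
    Tendsto (fun w : ℂ => deriv ψ w) (comap Complex.abs atTop) (nhds (ψcoef 1)) := by
  set T : ℂ → ℂ := fun w => ψ w - (ψcoef 1 * w + ψcoef 0) with hTdef
  have hTdiff : DifferentiableOn ℂ T {w : ℂ | 1 < Complex.abs w} := by
    apply hψdiff.sub
    apply Differentiable.differentiableOn
    exact (differentiable_id.const_mul _).add_const _
  have hT0 : Tendsto T (comap Complex.abs atTop) (nhds 0) := by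
    apply (tailTendsto S).congr'
    refine ev_iff.2 ⟨2, fun w hw => ?_⟩
    have hw1 : 1 < Complex.abs w := by linarith
    simp only [hTdef]
    rw [hlaur w hw1]
    ring
  have hkey := keyDeriv hTdiff hT0
  have hd : ∀ w : ℂ, 1 < Complex.abs w → deriv T w = deriv ψ w - ψcoef 1 := by
    intro w hw
    have hψat : DifferentiableAt ℂ ψ w :=
      hψdiff.differentiableAt (isOpenOmega.mem_nhds hw)
    have h1 : HasDerivAt (fun w : ℂ => ψcoef 1 * w + ψcoef 0) (ψcoef 1) w := by
      simpa using (((hasDerivAt_id w).const_mul (ψcoef 1)).add_const (ψcoef 0))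
    rw [hTdef]
    rw [deriv_fun_sub hψat h1.differentiableAt, h1.deriv]
  have hlim : Tendsto (fun w : ℂ => (w * deriv T w) * w⁻¹ + ψcoef 1)
      (comap Complex.abs atTop) (nhds (ψcoef 1)) := by
    have := (hkey.mul invTendsto).add (tendsto_const_nhds (x := ψcoef 1))
    simpa using this
  apply hlim.congr'
  refine ev_iff.2 ⟨2, fun w hw => ?_⟩
  have hw1 : 1 < Complex.abs w := by linarith
  have hw0 : w ≠ 0 := by intro h; rw [h, map_zero] at hw1; norm_num at hw1
  simp only
  rw [hd w hw1]
  field_simp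
  ring

lemma faberDerivAsymp {F : ℕ → Polynomial ℂ}
    (hψdiff : DifferentiableOn ℂ ψ {w : ℂ | 1 < Complex.abs w})
    (hFfaber : ∀ n : ℕ, Tendsto (fun w => (F n).eval (ψ w) - w^n)
        (comap Complex.abs atTop) (nhds 0)) (m : ℕ) :
    Tendsto (fun w : ℂ => w * ((F (m+1)).derivative.eval (ψ w) * deriv ψ w
      - ((m:ℂ)+1) * w^m)) (comap Complex.abs atTop) (nhds 0) := by
  set g : ℂ → ℂ := fun w => (F (m+1)).eval (ψ w) - w^(m+1) with hgdef
  have hgdiff : DifferentiableOn ℂ g {w : ℂ | 1 < Complex.abs w} := by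
    apply DifferentiableOn.sub
    · exact (F (m+1)).differentiable.comp_differentiableOn hψdiff
    · exact (differentiable_pow (m+1)).differentiableOn
  have hkey := keyDeriv hgdiff (hFfaber (m+1))
  apply hkey.congr'
  refine ev_iff.2 ⟨2, fun w hw => ?_⟩
  have hw1 : 1 < Complex.abs w := by linarith
  have hψat : DifferentiableAt ℂ ψ w :=
    hψdiff.differentiableAt (isOpenOmega.mem_nhds hw1)
  have hc : HasDerivAt (fun w : ℂ => (F (m+1)).eval (ψ w))
      ((F (m+1)).derivative.eval (ψ w) * deriv ψ w) w :=
    (Polynomial.hasDerivAt (F (m+1)) (ψ w)).comp w hψat.hasDerivAt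
  have hp : HasDerivAt (fun x : ℂ => x^(m+1)) (((m:ℂ)+1) * w^m) w := by
    have := hasDerivAt_pow (m+1) w
    simpa using this
  have : deriv g w = (F (m+1)).derivative.eval (ψ w) * deriv ψ w - ((m:ℂ)+1) * w^m :=
    (hc.sub hp).deriv
  simp only [this]


lemma mainTail (n : ℕ)
    (hlaur : ∀ w : ℂ, 1 < Complex.abs w →
      ψ w = ψcoef 1 * w + ψcoef 0 + ∑' k : ℕ, ψcoef (-(k:ℤ)-1) * w^(-(k:ℤ)-1))
    (S : Summable (fun k : ℕ => Complex.abs (ψcoef (-(k:ℤ)-1)) * ((2:ℝ)^(k+1))⁻¹)) :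
    Tendsto (fun w : ℂ => ψ w * w^n - ∑ j ∈ Finset.range (n+2), ψcoef ((j:ℤ)-(n:ℤ)) * w^j)
      (comap Complex.abs atTop) (nhds 0) := by
  have hb : Summable (fun i : ℕ => Complex.abs ((fun i : ℕ => ψcoef (-(i:ℤ)-(n:ℤ)-1)) i)
      * ((2:ℝ)^(i+1))⁻¹) := shiftSummable n S
  apply (tailTendsto hb).congr'
  refine ev_iff.2 ⟨2, fun w hw => ?_⟩
  have hw1 : 1 < Complex.abs w := by linarith
  have hw0 : w ≠ 0 := by intro h; rw [h, map_zero] at hw1; norm_num at hw1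
  simp only
  -- summability of the full shifted series
  have hSum : Summable (fun k : ℕ => ψcoef (-(k:ℤ)-1) * w^(-(k:ℤ)-1)) := tailSummable S hw
  have hSum2 : Summable (fun k : ℕ => ψcoef (-(k:ℤ)-1) * w^(-(k:ℤ)-1) * w^n) :=
    hSum.mul_right _
  have hsplit := Summable.sum_add_tsum_nat_add (f := fun k : ℕ => ψcoef (-(k:ℤ)-1) * w^(-(k:ℤ)-1) * w^n)
    n hSum2
  -- the shifted tail terms
  have htail_eq : ∀ i : ℕ, ψcoef (-((i+n:ℕ):ℤ)-1) * w^(-((i+n:ℕ):ℤ)-1) * w^n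
      = ψcoef (-(i:ℤ)-(n:ℤ)-1) * w^(-(i:ℤ)-1) := by
    intro i
    have h1 : (-((i+n:ℕ):ℤ)-1) = -(i:ℤ)-(n:ℤ)-1 := by push_cast; ring
    rw [h1, mul_assoc]
    congr 1
    rw [← zpow_natCast w n, ← zpow_add₀ hw0]
    congr 1
    ring
  -- the finite part equals the low-degree part of the polynomial sum
  have hfin : ∑ k ∈ Finset.range n, ψcoef (-(k:ℤ)-1) * w^(-(k:ℤ)-1) * w^n
      = ∑ j ∈ Finset.range n, ψcoef ((j:ℤ)-(n:ℤ)) * w^j := by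
    rw [← Finset.sum_range_reflect (fun j => ψcoef ((j:ℤ)-(n:ℤ)) * w^j) n]
    apply Finset.sum_congr rfl
    intro k hk
    rw [Finset.mem_range] at hk
    have hcast : ((n - 1 - k : ℕ) : ℤ) = (n:ℤ) - 1 - (k:ℤ) := by omega
    rw [hcast]
    have h1 : ((n:ℤ) - 1 - (k:ℤ)) - (n:ℤ) = -(k:ℤ)-1 := by ring
    rw [h1, mul_assoc]
    congr 1
    rw [← zpow_natCast w n, ← zpow_add₀ hw0, ← zpow_natCast w (n-1-k)]
    congr 1
    omega
  -- the big polynomial sum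
  have hbig : ∑ j ∈ Finset.range (n+2), ψcoef ((j:ℤ)-(n:ℤ)) * w^j
      = (∑ j ∈ Finset.range n, ψcoef ((j:ℤ)-(n:ℤ)) * w^j)
        + ψcoef 0 * w^n + ψcoef 1 * w^(n+1) := by
    rw [Finset.sum_range_succ, Finset.sum_range_succ]
    have e1 : ((n:ℤ)) - (n:ℤ) = 0 := by ring
    have e2 : ((n+1:ℕ):ℤ) - (n:ℤ) = 1 := by push_cast; ring
    rw [e1, e2]
  -- tsum times w^n
  have htsum_mul : (∑' k : ℕ, ψcoef (-(k:ℤ)-1) * w^(-(k:ℤ)-1)) * w^n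
      = ∑' k : ℕ, ψcoef (-(k:ℤ)-1) * w^(-(k:ℤ)-1) * w^n := tsum_mul_right.symm
  -- put it together
  rw [hlaur w hw1]
  have hshift : ∑' i : ℕ, ψcoef (-(i:ℤ)-(n:ℤ)-1) * w^(-(i:ℤ)-1)
      = ∑' i : ℕ, ψcoef (-((i+n:ℕ):ℤ)-1) * w^(-((i+n:ℕ):ℤ)-1) * w^n := by
    apply tsum_congr
    intro i
    rw [htail_eq i]
  rw [hshift]
  have hw1pow : (ψcoef 1 * w) * w^n = ψcoef 1 * w^(n+1) := by ring
  calc ∑' i : ℕ, ψcoef (-((i+n:ℕ):ℤ)-1) * w^(-((i+n:ℕ):ℤ)-1) * w^n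
      = (∑' k : ℕ, ψcoef (-(k:ℤ)-1) * w^(-(k:ℤ)-1) * w^n)
        - ∑ k ∈ Finset.range n, ψcoef (-(k:ℤ)-1) * w^(-(k:ℤ)-1) * w^n := by
        rw [← hsplit]; ring
    _ = (ψcoef 1 * w + ψcoef 0 + ∑' k : ℕ, ψcoef (-(k:ℤ)-1) * w^(-(k:ℤ)-1)) * w^n
        - ∑ j ∈ Finset.range (n+2), ψcoef ((j:ℤ)-(n:ℤ)) * w^j := by
        rw [hbig, hfin, add_mul, add_mul, htsum_mul, hw1pow]
        ring

end Psi

/-- The multiplication formula for derived Faber polynomials: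
`z F'_{n+1}(z)/(n+1) = ∑_{j=0}^{n+1} ψ_{j−n} F'_{j+1}(z)/(j+1)`. -/
theorem faber_multiplication
    (ψ : ℂ → ℂ)
    (hψdiff : DifferentiableOn ℂ ψ {w : ℂ | 1 < ‖w‖})
    (hψinj : Set.InjOn ψ {w : ℂ | 1 < ‖w‖})
    -- Laurent expansion `ψ(w) = ψ₁ w + ψ₀ + ∑_{k≥1} ψ_{−k} w^{−k}`, `ψ₁ ≠ 0`,
    -- absolutely convergent on `𝔻*`; we write `ψcoef m` for `ψ_m`
    (ψcoef : ℤ → ℂ) (hψ1 : ψcoef 1 ≠ 0)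
    (hlaurSum : ∀ w : ℂ, 1 < ‖w‖ →
      Summable (fun k : ℕ => ‖ψcoef (-(k:ℤ)-1) * w^(-(k:ℤ)-1)‖))
    (hlaur : ∀ w : ℂ, 1 < ‖w‖ →
      ψ w = ψcoef 1 * w + ψcoef 0 + ∑' k : ℕ, ψcoef (-(k:ℤ)-1) * w^(-(k:ℤ)-1))
    -- the Faber polynomials of `ψ`
    (F : ℕ → Polynomial ℂ)
    (hFdeg : ∀ n : ℕ, (F n).degree = (n : ℕ))
    (hFfaber : ∀ n : ℕ, Tendsto (fun w => (F n).eval (ψ w) - w^n)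
        (comap (fun w : ℂ => ‖w‖) atTop) (nhds 0)) :
    ∀ n : ℕ, ∀ z : ℂ,
      z * (F (n+1)).derivative.eval z / ((n:ℂ)+1)
        = ∑ j ∈ Finset.range (n+2),
            ψcoef ((j:ℤ) - (n:ℤ)) * (F (j+1)).derivative.eval z / ((j:ℂ)+1) := by
  intro n z
  have S := coefSummable hlaurSum
  have hjj : ∀ j : ℕ, ((j:ℂ)+1) ≠ 0 := fun j => Nat.cast_add_one_ne_zero j
  set G : Polynomial ℂ := Polynomial.C (((n:ℂ)+1)⁻¹) * (Polynomial.X * (F (n+1)).derivative)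
    - ∑ j ∈ Finset.range (n+2),
        Polynomial.C (ψcoef ((j:ℤ)-(n:ℤ)) * ((j:ℂ)+1)⁻¹) * (F (j+1)).derivative with hGdef
  have hGeval : ∀ x : ℂ, G.eval x
      = x * (F (n+1)).derivative.eval x / ((n:ℂ)+1)
        - ∑ j ∈ Finset.range (n+2),
            ψcoef ((j:ℤ)-(n:ℤ)) * (F (j+1)).derivative.eval x / ((j:ℂ)+1) := by
    intro x
    rw [hGdef]
    rw [Polynomial.eval_sub, Polynomial.eval_mul, Polynomial.eval_mul, Polynomial.eval_C,
      Polynomial.eval_X, Polynomial.eval_finset_sum]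
    congr 1
    · rw [div_eq_mul_inv]; ring
    · apply Finset.sum_congr rfl
      intro j _
      rw [Polynomial.eval_mul, Polynomial.eval_C, div_eq_mul_inv]
      ring
  have hE := faberDerivAsymp hψdiff hFfaber
  have hψ'lim := psiDerivLim hψdiff hlaur S
  have hdivW := psiDivW hlaur S
  have habsψ := psiGrowth hlaur S hψ1
  -- the product `deriv ψ w * G.eval (ψ w)` tends to 0
  have hP : Tendsto (fun w : ℂ => deriv ψ w * G.eval (ψ w)) (comap Complex.abs atTop)
      (nhds 0) := by
    have t1 := mainTail (ψ := ψ) (ψcoef := ψcoef) n hlaur S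
    have t2 : Tendsto (fun w : ℂ => (ψ w * w⁻¹) * (w * ((F (n+1)).derivative.eval (ψ w)
        * deriv ψ w - ((n:ℂ)+1)*w^n)) * ((n:ℂ)+1)⁻¹) (comap Complex.abs atTop) (nhds 0) := by
      have := (hdivW.mul (hE n)).mul_const (((n:ℂ)+1)⁻¹)
      simpa using this
    have t3 : Tendsto (fun w : ℂ => ∑ j ∈ Finset.range (n+2),
        ψcoef ((j:ℤ)-(n:ℤ)) * ((j:ℂ)+1)⁻¹ * ((w * ((F (j+1)).derivative.eval (ψ w)
          * deriv ψ w - ((j:ℂ)+1)*w^j)) * w⁻¹)) (comap Complex.abs atTop) (nhds 0) := by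
      have h0 : Tendsto (fun w : ℂ => ∑ j ∈ Finset.range (n+2),
          ψcoef ((j:ℤ)-(n:ℤ)) * ((j:ℂ)+1)⁻¹ * ((w * ((F (j+1)).derivative.eval (ψ w)
            * deriv ψ w - ((j:ℂ)+1)*w^j)) * w⁻¹)) (comap Complex.abs atTop)
          (nhds (∑ j ∈ Finset.range (n+2), 0)) := by
        apply tendsto_finset_sum
        intro j _
        have := ((hE j).mul invTendsto).const_mul (ψcoef ((j:ℤ)-(n:ℤ)) * ((j:ℂ)+1)⁻¹)
        simpa [mul_assoc] using this
      simpa using h0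
    have combo := (t1.add t2).sub t3
    rw [show ((0:ℂ) + 0 - 0 : ℂ) = 0 by ring] at combo
    apply combo.congr'
    refine ev_iff.2 ⟨2, fun w hw => ?_⟩
    have hw1 : 1 < Complex.abs w := by linarith
    have hw0 : w ≠ 0 := by intro h; rw [h, map_zero] at hw1; norm_num at hw1
    simp only
    rw [hGeval (ψ w)]
    have eq1 : deriv ψ w * (ψ w * (F (n+1)).derivative.eval (ψ w) / ((n:ℂ)+1))
        = ψ w * w^n + (ψ w * w⁻¹) * (w * ((F (n+1)).derivative.eval (ψ w)
          * deriv ψ w - ((n:ℂ)+1)*w^n)) * ((n:ℂ)+1)⁻¹ := by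
      field_simp [hjj n]
      ring
    have eq2 : deriv ψ w * (∑ j ∈ Finset.range (n+2),
        ψcoef ((j:ℤ)-(n:ℤ)) * (F (j+1)).derivative.eval (ψ w) / ((j:ℂ)+1))
        = (∑ j ∈ Finset.range (n+2), ψcoef ((j:ℤ)-(n:ℤ)) * w^j)
          + ∑ j ∈ Finset.range (n+2),
            ψcoef ((j:ℤ)-(n:ℤ)) * ((j:ℂ)+1)⁻¹ * ((w * ((F (j+1)).derivative.eval (ψ w)
              * deriv ψ w - ((j:ℂ)+1)*w^j)) * w⁻¹) := by
      rw [Finset.mul_sum, ← Finset.sum_add_distrib]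
      apply Finset.sum_congr rfl
      intro j _
      field_simp [hjj j]
      ring
    linear_combination eq2 - eq1
  -- hence `G.eval ∘ ψ` tends to 0
  have hGlim : Tendsto (fun w : ℂ => G.eval (ψ w)) (comap Complex.abs atTop) (nhds 0) := by
    have hinv := (hψ'lim.inv₀ hψ1).mul hP
    rw [show (ψcoef 1)⁻¹ * 0 = 0 by ring] at hinv
    apply hinv.congr'
    have hne : ∀ᶠ w in comap Complex.abs atTop, deriv ψ w ≠ 0 := hψ'lim.eventually_ne hψ1
    filter_upwards [hne] with w hw
    exact inv_mul_cancel_left₀ hw _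
  -- conclude `G = 0`
  have hG0 : G = 0 := by
    by_cases hdeg : 0 < G.degree
    · exfalso
      have ht := Polynomial.tendsto_abv_atTop (R := ℂ) Complex.abs G hdeg
        (l := comap Complex.abs atTop) (z := ψ) habsψ
      have h2 : Tendsto (fun w : ℂ => Complex.abs (G.eval (ψ w))) (comap Complex.abs atTop)
          (nhds 0) := by
        have := hGlim.norm
        simpa [Complex.norm_eq_abs] using this
      exact not_tendsto_nhds_of_tendsto_atTop ht 0 h2
    · have hle : G.degree ≤ 0 := le_of_not_gt hdeg
      have hc := Polynomial.eq_C_of_degree_le_zero hle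
      have hc0 : G.coeff 0 = 0 := by
        have hconst : Tendsto (fun w : ℂ => G.eval (ψ w)) (comap Complex.abs atTop)
            (nhds (G.coeff 0)) := by
          have heq : ∀ w : ℂ, G.eval (ψ w) = G.coeff 0 := fun w => by
            rw [hc]; simp
          simp only [heq]
          exact tendsto_const_nhds
        exact tendsto_nhds_unique hconst hGlim
      rw [hc, hc0]; simp
  have hz := hGeval z
  rw [hG0] at hz
  simp only [Polynomial.eval_zero] at hz
  exact (sub_eq_zero.1 hz.symm)
end
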